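/- arXiv:2002.00347 — 7 statements merged into one kernel-verified Lean document; each statement's English description precedes it below -/
import Mathlib

section
/- Let 𝒢 be a finite connected simple graph with killing function κ not identically zero, A a one-form on 𝒢, and β ∈ ℝ. Set E^β = P − P^β. Then Tr(G E^β) = Σ_{(x,y) ∈ X×X} G_{xy} P_{yx} (1 − cos(β A_{yx})); in particular Tr(G E^β) is a nonnegative real number. -/
open Matrix Finset Filter
open scoped NNReal Topology

section Aux
variable {n : Type*} [Fintype n] [DecidableEq n]

attribute [local instance] Matrix.linftyOpNormedAddCommGroup Matrix.linftyOpNormedRing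

private lemma aux_complete : CompleteSpace (Matrix n n ℝ) :=
  (by
    letI := (Matrix.linftyOpNormedSpace : NormedSpace ℝ (Matrix n n ℝ))
    exact FiniteDimensional.complete ℝ (Matrix n n ℝ))

attribute [local instance] aux_complete

private lemma aux_geom : HasSummableGeomSeries (Matrix n n ℝ) := by
  letI := (Matrix.linftyOpNormedSpace : NormedSpace ℝ (Matrix n n ℝ))
  haveI := FiniteDimensional.complete ℝ (Matrix n n ℝ)
  infer_instance

attribute [local instance] aux_geom

private lemma aux_entry_le_norm (M : Matrix n n ℝ) (i j : n) : |M i j| ≤ ‖M‖ := by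
  rw [Matrix.linfty_opNorm_def]
  calc |M i j| = ((‖M i j‖₊ : ℝ≥0) : ℝ) := by rw [coe_nnnorm, Real.norm_eq_abs]
    _ ≤ ((∑ k, ‖M i k‖₊ : ℝ≥0) : ℝ) := by
        exact_mod_cast Finset.single_le_sum (f := fun k => ‖M i k‖₊)
          (fun k _ => zero_le) (Finset.mem_univ j)
    _ ≤ _ := by
        exact_mod_cast Finset.le_sup (f := fun i : n => ∑ k, ‖M i k‖₊) (Finset.mem_univ i)

private lemma aux_inv_nonneg (P : Matrix n n ℝ) (hPnn : ∀ i j, 0 ≤ P i j)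
    (N : ℕ) (hN : ∀ i, ∑ j, (P ^ N) i j < 1) :
    IsUnit (1 - P).det ∧ ∀ i j, 0 ≤ (1 - P)⁻¹ i j := by
  have hpow : ∀ (k : ℕ) i j, 0 ≤ (P ^ k) i j := by
    intro k
    induction k with
    | zero => intro i j; simp [Matrix.one_apply]; positivity
    | succ k ih =>
      intro i j
      rw [pow_succ, Matrix.mul_apply]
      exact Finset.sum_nonneg fun c _ => mul_nonneg (ih i c) (hPnn c j)
  set Q : Matrix n n ℝ := P ^ N with hQdef
  have hQnorm : ‖Q‖ < 1 := by
    rw [Matrix.linfty_opNorm_def]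
    have : ((Finset.univ.sup fun i : n => ∑ j, ‖Q i j‖₊ : ℝ≥0) : ℝ) < (1 : ℝ) := by
      rw [NNReal.coe_lt_one]
      rcases isEmpty_or_nonempty n with h | h
      · simp
      refine Finset.sup_lt_iff (by norm_num) |>.mpr fun i _ => ?_
      rw [← NNReal.coe_lt_one]
      push_cast
      calc (∑ j, ‖Q i j‖ : ℝ) = ∑ j, Q i j := by
            refine Finset.sum_congr rfl fun j _ => ?_
            rw [Real.norm_eq_abs, abs_of_nonneg (hpow N i j)]
        _ < 1 := hN i
    exact this
  have hsum : Summable fun q : ℕ => Q ^ q := summable_geometric_of_norm_lt_one hQnorm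
  set S : Matrix n n ℝ := ∑' q : ℕ, Q ^ q with hSdef
  have hQS : (1 - Q) * S = 1 := mul_neg_geom_series Q hQnorm
  set T : Matrix n n ℝ := ∑ k ∈ Finset.range N, P ^ k with hTdef
  have hPT : (1 - P) * T = 1 - Q := by
    rw [hTdef, hQdef, mul_neg_geom_sum]
  have hright : (1 - P) * (T * S) = 1 := by
    rw [← mul_assoc, hPT, hQS]
  have hunit : IsUnit (1 - P).det := Matrix.isUnit_det_of_right_inverse hright
  refine ⟨hunit, ?_⟩
  have hGr : (1 - P)⁻¹ = T * S := Matrix.inv_eq_right_inv hright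
  have hSnn : ∀ i j, 0 ≤ S i j := by
    intro i j
    have htend : Tendsto (fun m : ℕ => ∑ q ∈ Finset.range m, Q ^ q) atTop (𝓝 S) :=
      hsum.hasSum.tendsto_sum_nat
    have hentry : Tendsto (fun m : ℕ => (∑ q ∈ Finset.range m, Q ^ q) i j) atTop (𝓝 (S i j)) := by
      rw [tendsto_iff_norm_sub_tendsto_zero]
      have h0 : Tendsto (fun m : ℕ => ‖(∑ q ∈ Finset.range m, Q ^ q) - S‖) atTop (𝓝 0) :=
        tendsto_iff_norm_sub_tendsto_zero.mp htend
      refine squeeze_zero (fun m => norm_nonneg _) (fun m => ?_) h0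
      have := aux_entry_le_norm ((∑ q ∈ Finset.range m, Q ^ q) - S) i j
      simpa [Matrix.sub_apply] using this
    refine ge_of_tendsto' hentry fun m => ?_
    rw [Matrix.sum_apply]
    refine Finset.sum_nonneg fun q _ => ?_
    show (0:ℝ) ≤ (Q ^ q) i j
    rw [hQdef, ← pow_mul]
    exact hpow (N * q) i j
  have hTnn : ∀ i j, 0 ≤ T i j := by
    intro i j
    rw [hTdef, Matrix.sum_apply]
    exact Finset.sum_nonneg fun k _ => hpow k i j
  intro i j
  rw [hGr, Matrix.mul_apply]
  exact Finset.sum_nonneg fun c _ => mul_nonneg (hTnn i c) (hSnn c j)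

end Aux

section Comb
variable {V : Type*} [Fintype V] [DecidableEq V]

private lemma rowsum_succ (P : Matrix V V ℝ) (k : ℕ) (x : V) :
    ∑ y, (P ^ (k + 1)) x y = ∑ y, P x y * ∑ z, (P ^ k) y z := by
  simp_rw [pow_succ', Matrix.mul_apply, Finset.mul_sum]
  exact Finset.sum_comm

private lemma rowsum_le_one (P : Matrix V V ℝ) (hPnn : ∀ x y, 0 ≤ P x y)
    (hrow : ∀ x, ∑ y, P x y ≤ 1) : ∀ k x, ∑ y, (P ^ k) x y ≤ 1 := by
  intro k
  induction k with
  | zero => intro x; simp [Matrix.one_apply]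
  | succ k ih =>
    intro x
    rw [rowsum_succ]
    calc ∑ y, P x y * ∑ z, (P ^ k) y z ≤ ∑ y, P x y * 1 :=
          Finset.sum_le_sum fun y _ => mul_le_mul_of_nonneg_left (ih y) (hPnn x y)
      _ ≤ 1 := by simpa using hrow x

private lemma rowsum_dec (P : Matrix V V ℝ) (hPnn : ∀ x y, 0 ≤ P x y)
    (hrow : ∀ x, ∑ y, P x y ≤ 1) : ∀ k x, ∑ y, (P ^ (k + 1)) x y ≤ ∑ y, (P ^ k) x y := by
  intro k
  induction k with
  | zero =>
    intro x
    rw [rowsum_succ]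
    simpa [Matrix.one_apply] using hrow x
  | succ k ih =>
    intro x
    rw [rowsum_succ, rowsum_succ]
    exact Finset.sum_le_sum fun y _ => mul_le_mul_of_nonneg_left (ih y) (hPnn x y)

private lemma rowsum_anti (P : Matrix V V ℝ) (hPnn : ∀ x y, 0 ≤ P x y)
    (hrow : ∀ x, ∑ y, P x y ≤ 1) {k l : ℕ} (hkl : k ≤ l) (x : V) :
    ∑ y, (P ^ l) x y ≤ ∑ y, (P ^ k) x y := by
  induction l, hkl using Nat.le_induction with
  | base => exact le_refl _
  | succ l hkl ih => exact le_trans (rowsum_dec P hPnn hrow l x) ih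

private lemma rowsum_step (P : Matrix V V ℝ) (hPnn : ∀ x y, 0 ≤ P x y)
    (hrow : ∀ x, ∑ y, P x y ≤ 1) {x y : V} {k : ℕ}
    (hpos : 0 < P x y) (hlt : ∑ z, (P ^ k) y z < 1) :
    ∑ z, (P ^ (k + 1)) x z < 1 := by
  rw [rowsum_succ]
  have h1 : ∑ z, P x z * ∑ w, (P ^ k) z w < ∑ z, P x z := by
    refine Finset.sum_lt_sum (fun z _ => ?_) ⟨y, Finset.mem_univ y, ?_⟩
    · calc P x z * ∑ w, (P ^ k) z w ≤ P x z * 1 :=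
        mul_le_mul_of_nonneg_left (rowsum_le_one P hPnn hrow k z) (hPnn x z)
      _ = P x z := mul_one _
    · exact mul_lt_of_lt_one_right hpos hlt
  exact lt_of_lt_of_le h1 (hrow x)

end Comb

/-- With `E^β = P - P^β`, one has
`Tr(G E^β) = ∑_{x,y} G_{xy} P_{yx} (1 - cos(β A_{yx}))`; in particular `Tr(G E^β)` is a
nonnegative real number. -/
theorem trace_green_mul_perturbation
    {V : Type*} [Fintype V] [DecidableEq V]
    (G : SimpleGraph V) [DecidableRel G.Adj] (hconn : G.Connected)
    (κ : V → ℝ) (hκnn : ∀ x, 0 ≤ κ x) (hκ : κ ≠ 0)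
    (P : Matrix V V ℝ)
    (hP : ∀ x y, P x y = if G.Adj x y then 1 / (κ x + (G.degree x : ℝ)) else 0)
    (Gr : Matrix V V ℝ) (hGr : Gr = (1 - P)⁻¹)
    (A : Matrix V V ℝ)
    (hAskew : ∀ x y, A x y = - A y x)
    (hAsupp : ∀ x y, ¬ G.Adj x y → A x y = 0)
    (β : ℝ)
    (Pβ : Matrix V V ℂ)
    (hPβ : ∀ x y, Pβ x y =
      if G.Adj x y then Complex.exp (Complex.I * β * A x y) / ((κ x + (G.degree x : ℝ) : ℝ) : ℂ)
      else 0)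
    (Eβ : Matrix V V ℂ) (hEβ : Eβ = P.map Complex.ofReal - Pβ) :
    Matrix.trace (Gr.map Complex.ofReal * Eβ) =
      ((∑ x : V, ∑ y : V, Gr x y * P y x * (1 - Real.cos (β * A y x)) : ℝ) : ℂ) ∧
    0 ≤ ∑ x : V, ∑ y : V, Gr x y * P y x * (1 - Real.cos (β * A y x)) := by
  -- basic facts
  obtain ⟨z, hz⟩ : ∃ z, κ z ≠ 0 := Function.ne_iff.mp hκ
  have hzpos : 0 < κ z := lt_of_le_of_ne (hκnn z) (Ne.symm hz)
  have : Nonempty V := ⟨z⟩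
  have hm : ∀ x, 0 < κ x + (G.degree x : ℝ) := by
    intro x
    rcases eq_or_ne x z with rfl | hxz
    · have : (0:ℝ) ≤ (G.degree x : ℝ) := Nat.cast_nonneg _
      linarith
    · have hreach : G.Reachable x z := hconn.preconnected x z
      have hdeg : 0 < G.degree x := by
        rw [SimpleGraph.degree_pos_iff_exists_adj]
        obtain ⟨w⟩ := hreach
        cases w with
        | nil => exact absurd rfl hxz
        | cons h p => exact ⟨_, h⟩
      have : (0:ℝ) < (G.degree x : ℝ) := by exact_mod_cast hdeg
      have := hκnn x
      linarith
  have hPnn : ∀ x y, 0 ≤ P x y := by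
    intro x y
    rw [hP]
    split
    · exact le_of_lt (one_div_pos.mpr (hm x))
    · exact le_refl _
  have hrowformula : ∀ x, ∑ y, P x y = (G.degree x : ℝ) * (1 / (κ x + (G.degree x : ℝ))) := by
    intro x
    simp only [hP]
    rw [← Finset.sum_filter]
    rw [Finset.sum_const]
    have : Finset.univ.filter (fun y => G.Adj x y) = G.neighborFinset x := by
      ext y; simp [SimpleGraph.mem_neighborFinset]
    rw [this]
    rw [SimpleGraph.card_neighborFinset_eq_degree]
    rw [nsmul_eq_mul]
  have hrowle : ∀ x, ∑ y, P x y ≤ 1 := by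
    intro x
    rw [hrowformula]
    rw [mul_one_div, div_le_one (hm x)]
    have := hκnn x
    linarith
  -- a killed vertex has row sum < 1
  have hbase : ∀ v, κ v ≠ 0 → ∑ y, (P ^ 1) v y < 1 := by
    intro v hv
    have hvpos : 0 < κ v := lt_of_le_of_ne (hκnn v) (Ne.symm hv)
    rw [pow_one, hrowformula, mul_one_div, div_lt_one (hm v)]
    linarith
  -- walk induction
  have hwalk : ∀ (u vtx : V) (w : G.Walk u vtx), κ vtx ≠ 0 →
      ∑ y, (P ^ (w.length + 1)) u y < 1 := by
    intro u vtx w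
    induction w with
    | nil => intro hv; simpa using hbase _ hv
    | @cons a b c h p ih =>
      intro hv
      have hpos : 0 < P a b := by
        rw [hP, if_pos h]
        exact one_div_pos.mpr (hm a)
      exact rowsum_step P hPnn hrowle hpos (ih hv)
  have hN : ∀ x, ∑ y, (P ^ (Fintype.card V)) x y < 1 := by
    intro x
    obtain ⟨w⟩ := hconn.preconnected x z
    set p := w.toPath with hp
    have hlen : p.1.length + 1 ≤ Fintype.card V :=
      Nat.succ_le_of_lt (SimpleGraph.Walk.IsPath.length_lt p.2)
    exact lt_of_le_of_lt (rowsum_anti P hPnn hrowle hlen x) (hwalk x z p.1 hz)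
  obtain ⟨hunit, hGrnn'⟩ := aux_inv_nonneg P hPnn (Fintype.card V) hN
  have hGrnn : ∀ x y, 0 ≤ Gr x y := by intro x y; rw [hGr]; exact hGrnn' x y
  -- symmetry
  have h1 : (1 - P) * Gr = 1 := by rw [hGr]; exact Matrix.mul_nonsing_inv _ hunit
  have h2 : Gr * (1 - P) = 1 := by rw [hGr]; exact Matrix.nonsing_inv_mul _ hunit
  set D : Matrix V V ℝ := Matrix.diagonal (fun x => κ x + (G.degree x : ℝ)) with hD_def
  have hDM : D * (1 - P) = (1 - P)ᵀ * D := by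
    ext i j
    rw [Matrix.diagonal_mul, Matrix.mul_diagonal, Matrix.transpose_apply]
    rcases eq_or_ne i j with rfl | hij
    · ring
    · have hOne : (1 : Matrix V V ℝ) i j = 0 := Matrix.one_apply_ne hij
      have hOne' : (1 : Matrix V V ℝ) j i = 0 := Matrix.one_apply_ne (Ne.symm hij)
      rw [Matrix.sub_apply, Matrix.sub_apply, hOne, hOne']
      by_cases hadj : G.Adj i j
      · rw [hP i j, hP j i, if_pos hadj, if_pos hadj.symm]
        have hi := (hm i).ne'
        have hj := (hm j).ne'
        field_simp
        ring
      · rw [hP i j, hP j i, if_neg hadj, if_neg fun h => hadj h.symm]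
        ring
  have e1 : Grᵀ * (1 - P)ᵀ = 1 := by
    rw [← Matrix.transpose_mul, h1, Matrix.transpose_one]
  have hsymM : D * Gr = Grᵀ * D := by
    calc D * Gr = (Grᵀ * (1 - P)ᵀ) * (D * Gr) := by rw [e1, one_mul]
      _ = Grᵀ * (((1 - P)ᵀ * D) * Gr) := by rw [mul_assoc, mul_assoc]
      _ = Grᵀ * ((D * (1 - P)) * Gr) := by rw [hDM]
      _ = Grᵀ * (D * ((1 - P) * Gr)) := by rw [mul_assoc]
      _ = Grᵀ * D := by rw [h1, mul_one]
  have hsym : ∀ x y, (κ x + (G.degree x : ℝ)) * Gr x y = Gr y x * (κ y + (G.degree y : ℝ)) := by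
    intro x y
    have := congrFun (congrFun hsymM x) y
    rwa [Matrix.diagonal_mul, Matrix.mul_diagonal, Matrix.transpose_apply] at this
  have key : ∀ x y, Gr x y * P y x = Gr y x * P x y := by
    intro x y
    by_cases hadj : G.Adj x y
    · rw [hP y x, hP x y, if_pos hadj.symm, if_pos hadj]
      have hs := hsym x y
      rw [mul_one_div, mul_one_div, div_eq_div_iff (hm y).ne' (hm x).ne']
      linarith
    · rw [hP y x, hP x y, if_neg fun h => hadj h.symm, if_neg hadj]
      ring
  -- entry formula for Eβ
  have hEentry : ∀ x y, Eβ x y =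
      ((P x y : ℝ) : ℂ) * (1 - Complex.exp (Complex.I * β * A x y)) := by
    intro x y
    rw [hEβ]
    rw [Matrix.sub_apply, Matrix.map_apply, hPβ x y, hP x y]
    by_cases hadj : G.Adj x y
    · rw [if_pos hadj, if_pos hadj]
      have hmx : ((κ x + (G.degree x : ℝ) : ℝ) : ℂ) ≠ 0 := by
        exact_mod_cast (hm x).ne'
      push_cast
      ring
    · rw [if_neg hadj, if_neg hadj]
      push_cast
      ring
  -- term computation
  have hterm : ∀ x y, ((Gr x y : ℝ) : ℂ) * Eβ y x =
      ((Gr x y * P y x * (1 - Real.cos (β * A y x)) : ℝ) : ℂ) -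
      ((Gr x y * P y x * Real.sin (β * A y x) : ℝ) : ℂ) * Complex.I := by
    intro x y
    rw [hEentry y x]
    have hexp : Complex.exp (Complex.I * (β : ℂ) * ((A y x : ℝ) : ℂ)) =
        ((Real.cos (β * A y x) : ℝ) : ℂ) + ((Real.sin (β * A y x) : ℝ) : ℂ) * Complex.I := by
      rw [show (Complex.I * (β : ℂ) * ((A y x : ℝ) : ℂ)) = ((β * A y x : ℝ) : ℂ) * Complex.I by
        push_cast; ring]
      rw [Complex.exp_mul_I, Complex.ofReal_cos, Complex.ofReal_sin]
    rw [hexp]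
    push_cast
    ring
  -- trace as double sum
  have htr : Matrix.trace (Gr.map Complex.ofReal * Eβ) =
      ∑ x, ∑ y, ((Gr x y : ℝ) : ℂ) * Eβ y x := by
    rw [Matrix.trace]
    simp [Matrix.diag, Matrix.mul_apply, Matrix.map_apply]
  -- antisymmetric part vanishes
  set Sσ : ℝ := ∑ x, ∑ y, Gr x y * P y x * Real.sin (β * A y x) with hSσ_def
  have hSσ : Sσ = 0 := by
    have hflip : ∀ x y, Gr y x * P x y * Real.sin (β * A x y)
        = -(Gr x y * P y x * Real.sin (β * A y x)) := by
      intro x y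
      rw [← key x y, hAskew x y]
      rw [show β * -A y x = -(β * A y x) by ring, Real.sin_neg]
      ring
    have h : Sσ = -Sσ := by
      calc Sσ = ∑ y, ∑ x, Gr x y * P y x * Real.sin (β * A y x) := Finset.sum_comm
        _ = ∑ x, ∑ y, Gr y x * P x y * Real.sin (β * A x y) := rfl
        _ = ∑ x, ∑ y, -(Gr x y * P y x * Real.sin (β * A y x)) := by
            exact Finset.sum_congr rfl fun x _ => Finset.sum_congr rfl fun y _ => hflip x y
        _ = -Sσ := by rw [hSσ_def]; simp [Finset.sum_neg_distrib]
    linarith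
  constructor
  · rw [htr]
    calc ∑ x, ∑ y, ((Gr x y : ℝ) : ℂ) * Eβ y x
        = ∑ x, ∑ y, (((Gr x y * P y x * (1 - Real.cos (β * A y x)) : ℝ) : ℂ) -
            ((Gr x y * P y x * Real.sin (β * A y x) : ℝ) : ℂ) * Complex.I) :=
          Finset.sum_congr rfl fun x _ => Finset.sum_congr rfl fun y _ => hterm x y
      _ = ((∑ x, ∑ y, Gr x y * P y x * (1 - Real.cos (β * A y x)) : ℝ) : ℂ) -
            ((Sσ : ℝ) : ℂ) * Complex.I := by
          rw [hSσ_def]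
          simp only [Finset.sum_sub_distrib, ← Finset.sum_mul]
          push_cast
          ring
      _ = _ := by rw [hSσ]; simp
  · refine Finset.sum_nonneg fun x _ => Finset.sum_nonneg fun y _ => ?_
    have h1c : 0 ≤ 1 - Real.cos (β * A y x) := by
      have := Real.cos_le_one (β * A y x); linarith
    exact mul_nonneg (mul_nonneg (hGrnn x y) (hPnn y x)) h1c
end

section
/- Let 𝒢 be a finite connected simple graph with killing function κ not identically zero and A a one-form on 𝒢. Set E^β = P − P^β. Then lim_{β→0} β^{−2} Tr(G E^β) = (1/2) Tr((P ⊙ A^{⊙2}) G). -/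
open Matrix Filter

lemma exp_slope_tendsto :
    Tendsto (fun z : ℂ => (Complex.exp z - 1) / z) (nhdsWithin 0 {0}ᶜ) (nhds 1) := by
  have h := Complex.hasDerivAt_exp 0
  rw [hasDerivAt_iff_tendsto_slope] at h
  simp only [Complex.exp_zero] at h
  refine h.congr fun z => ?_
  simp [slope_def_field]

lemma tendsto_smul_punctured (c : ℂ) (hc : c ≠ 0) :
    Tendsto (fun w : ℂ => c * w) (nhdsWithin 0 {0}ᶜ) (nhdsWithin 0 {0}ᶜ) := by
  rw [tendsto_nhdsWithin_iff]
  constructor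
  · have : Tendsto (fun w : ℂ => c * w) (nhds 0) (nhds (c * 0)) :=
      (continuous_const.mul continuous_id).tendsto 0
    simpa using this.mono_left nhdsWithin_le_nhds
  · filter_upwards [self_mem_nhdsWithin] with w hw
    simp only [Set.mem_compl_iff, Set.mem_singleton_iff] at hw ⊢
    exact mul_ne_zero hc hw

lemma coshlike_tendsto :
    Tendsto (fun w : ℂ => (Complex.exp w + Complex.exp (-w) - 2) / w ^ 2)
      (nhdsWithin 0 {0}ᶜ) (nhds 1) := by
  have h2 : Tendsto (fun w : ℂ => (1/2 : ℂ) * w) (nhdsWithin 0 {0}ᶜ) (nhdsWithin 0 {0}ᶜ) :=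
    tendsto_smul_punctured _ (by norm_num)
  have hn2 : Tendsto (fun w : ℂ => (-(1/2) : ℂ) * w) (nhdsWithin 0 {0}ᶜ) (nhdsWithin 0 {0}ᶜ) :=
    tendsto_smul_punctured _ (by norm_num)
  have c1 : Tendsto (fun w : ℂ => (Complex.exp ((1/2) * w) - 1) / ((1/2) * w))
      (nhdsWithin 0 {0}ᶜ) (nhds 1) := exp_slope_tendsto.comp h2
  have c2 : Tendsto (fun w : ℂ => (Complex.exp (-(1/2) * w) - 1) / (-(1/2) * w))
      (nhdsWithin 0 {0}ᶜ) (nhds 1) := exp_slope_tendsto.comp hn2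
  have d1 : Tendsto (fun w : ℂ => (Complex.exp ((1/2) * w) - 1) / w)
      (nhdsWithin 0 {0}ᶜ) (nhds (1/2)) := by
    have h0 := c1.const_mul (1/2 : ℂ)
    rw [mul_one] at h0
    refine h0.congr fun w => ?_
    by_cases hw : w = 0
    · simp [hw]
    · field_simp
  have d2 : Tendsto (fun w : ℂ => (Complex.exp (-(1/2) * w) - 1) / w)
      (nhdsWithin 0 {0}ᶜ) (nhds (-(1/2))) := by
    have h0 := c2.const_mul (-(1/2) : ℂ)
    rw [mul_one] at h0
    refine h0.congr fun w => ?_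
    by_cases hw : w = 0
    · simp [hw]
    · field_simp
  have hh : Tendsto (fun w : ℂ => (Complex.exp ((1/2) * w) - Complex.exp (-(1/2) * w)) / w)
      (nhdsWithin 0 {0}ᶜ) (nhds 1) := by
    have h0 := d1.sub d2
    norm_num at h0
    refine h0.congr fun w => ?_
    rw [div_sub_div_same]
    ring_nf
  have hm := hh.mul hh
  rw [mul_one] at hm
  refine Tendsto.congr' ?_ hm
  filter_upwards [self_mem_nhdsWithin] with w hw
  simp only [Set.mem_compl_iff, Set.mem_singleton_iff] at hw
  have e1 : Complex.exp ((1/2) * w) * Complex.exp ((1/2) * w) = Complex.exp w := by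
    rw [← Complex.exp_add]; ring_nf
  have e2 : Complex.exp (-(1/2) * w) * Complex.exp (-(1/2) * w) = Complex.exp (-w) := by
    rw [← Complex.exp_add]; ring_nf
  have e3 : Complex.exp ((1/2) * w) * Complex.exp (-(1/2) * w) = 1 := by
    rw [← Complex.exp_add]; norm_num
  have key : (Complex.exp ((1/2) * w) - Complex.exp (-(1/2) * w)) *
      (Complex.exp ((1/2) * w) - Complex.exp (-(1/2) * w))
      = Complex.exp w + Complex.exp (-w) - 2 := by
    linear_combination e1 + e2 - 2 * e3
  rw [div_mul_div_comm, key, ← sq]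

lemma key_tendsto (a : ℝ) :
    Tendsto (fun β : ℝ => ((β : ℂ) ^ 2)⁻¹ *
        (2 - Complex.exp (Complex.I * β * a) - Complex.exp (-(Complex.I * β * a))))
      (nhdsWithin 0 {0}ᶜ) (nhds ((a : ℂ) ^ 2)) := by
  by_cases ha : a = 0
  · subst ha
    simp only [Complex.ofReal_zero, mul_zero, neg_zero, Complex.exp_zero]
    norm_num
  · have hIa : (Complex.I * a) ≠ 0 := by
      simp [Complex.I_ne_zero, Complex.ofReal_ne_zero.mpr ha]
    have hmap : Tendsto (fun β : ℝ => Complex.I * β * a) (nhdsWithin 0 {0}ᶜ)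
        (nhdsWithin 0 {0}ᶜ) := by
      rw [tendsto_nhdsWithin_iff]
      constructor
      · have : Continuous fun β : ℝ => Complex.I * (β : ℂ) * a := by continuity
        have := this.tendsto 0
        simp only [Complex.ofReal_zero, mul_zero, zero_mul] at this
        exact this.mono_left nhdsWithin_le_nhds
      · filter_upwards [self_mem_nhdsWithin] with β hβ
        simp only [Set.mem_compl_iff, Set.mem_singleton_iff] at hβ ⊢
        simp [Complex.I_ne_zero, Complex.ofReal_ne_zero.mpr ha, Complex.ofReal_ne_zero.mpr hβ]
    have hcomp := (coshlike_tendsto.comp hmap).const_mul ((a : ℂ) ^ 2)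
    rw [mul_one] at hcomp
    refine Tendsto.congr' ?_ hcomp
    filter_upwards [self_mem_nhdsWithin] with β hβ
    simp only [Set.mem_compl_iff, Set.mem_singleton_iff] at hβ
    have hβC : (β : ℂ) ≠ 0 := Complex.ofReal_ne_zero.mpr hβ
    have haC : (a : ℂ) ≠ 0 := Complex.ofReal_ne_zero.mpr ha
    simp only [Function.comp]
    have hw2 : (Complex.I * β * a) ^ 2 = -((β:ℂ)^2 * (a:ℂ)^2) := by
      rw [mul_pow, mul_pow, Complex.I_sq]; ring
    rw [hw2]
    field_simp
    ring


/-- With `E^β = P - P^β`,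
`lim_{β→0} β⁻² Tr(G E^β) = (1/2) Tr((P ⊙ A^{⊙2}) G)`. -/
theorem tendsto_trace_green_perturbation_div_sq
    {V : Type*} [Fintype V] [DecidableEq V]
    (G : SimpleGraph V) [DecidableRel G.Adj] (hconn : G.Connected)
    (κ : V → ℝ) (hκnn : ∀ x, 0 ≤ κ x) (hκ : κ ≠ 0)
    (P : Matrix V V ℝ)
    (hP : ∀ x y, P x y = if G.Adj x y then 1 / (κ x + (G.degree x : ℝ)) else 0)
    (Gr : Matrix V V ℝ) (hGr : Gr = (1 - P)⁻¹)
    (A : Matrix V V ℝ)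
    (hAskew : ∀ x y, A x y = - A y x)
    (hAsupp : ∀ x y, ¬ G.Adj x y → A x y = 0)
    (Pβ : ℝ → Matrix V V ℂ)
    (hPβ : ∀ β x y, Pβ β x y =
      if G.Adj x y then Complex.exp (Complex.I * β * A x y) / ((κ x + (G.degree x : ℝ) : ℝ) : ℂ)
      else 0)
    (Eβ : ℝ → Matrix V V ℂ) (hEβ : ∀ β, Eβ β = P.map Complex.ofReal - Pβ β) :
    Tendsto (fun β : ℝ => ((β : ℂ) ^ 2)⁻¹ * Matrix.trace (Gr.map Complex.ofReal * Eβ β))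
      (nhdsWithin 0 {0}ᶜ)
      (nhds (((1 / 2 : ℝ) * Matrix.trace ((P ⊙ (A ⊙ A)) * Gr) : ℝ) : ℂ)) := by
  have hsym : ∀ x y, Gr x y * P y x = Gr y x * P x y := by
    set d : V → ℝ := fun x => κ x + (G.degree x : ℝ) with hd
    have hdpos : ∀ {x y : V}, G.Adj x y → 0 < d x := by
      intro x y h
      have h1 : 0 < G.degree x := (G.degree_pos_iff_exists_adj x).mpr ⟨y, h⟩
      have h2 : (1 : ℝ) ≤ (G.degree x : ℝ) := by exact_mod_cast h1
      have := hκnn x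
      simp only [hd]
      linarith
    have hDM : (1 - P)ᵀ * (Matrix.diagonal d) = Matrix.diagonal d * (1 - P) := by
      ext x y
      rw [Matrix.mul_diagonal, Matrix.diagonal_mul, Matrix.transpose_apply]
      simp only [Matrix.sub_apply, Matrix.one_apply]
      rw [hP, hP]
      by_cases h : G.Adj x y
      · have h' : G.Adj y x := h.symm
        have hne : x ≠ y := h.ne
        have hx : d x ≠ 0 := ne_of_gt (hdpos h)
        have hy : d y ≠ 0 := ne_of_gt (hdpos h')
        rw [if_pos h, if_pos h', if_neg hne, if_neg hne.symm]
        field_simp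
        have ex : d x * (1 / (κ x + (G.degree x : ℝ))) = 1 := mul_one_div_cancel hx
        have ey : (1 / (κ y + (G.degree y : ℝ))) * d y = 1 := one_div_mul_cancel hy
        linear_combination ex - ey
      · have h' : ¬ G.Adj y x := fun hh => h hh.symm
        rw [if_neg h, if_neg h']
        by_cases hxy : x = y
        · simp [hxy, mul_comm]
        · simp only [if_neg hxy, if_neg (fun h : y = x => hxy h.symm)]
          ring
    by_cases hdet : IsUnit (1 - P).det
    · have hMM : (1 - P) * Gr = 1 := by rw [hGr]; exact Matrix.mul_nonsing_inv _ hdet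
      have h1 : (1 - P)ᵀ * (Matrix.diagonal d * Gr) = Matrix.diagonal d := by
        rw [← Matrix.mul_assoc, hDM, Matrix.mul_assoc, hMM, Matrix.mul_one]
      have hT : Grᵀ * (1 - P)ᵀ = 1 := by
        rw [← Matrix.transpose_mul, hMM, Matrix.transpose_one]
      have h2 : Matrix.diagonal d * Gr = Grᵀ * Matrix.diagonal d := by
        calc Matrix.diagonal d * Gr = (Grᵀ * (1 - P)ᵀ) * (Matrix.diagonal d * Gr) := by
              rw [hT, Matrix.one_mul]
          _ = Grᵀ * ((1 - P)ᵀ * (Matrix.diagonal d * Gr)) := by rw [Matrix.mul_assoc]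
          _ = Grᵀ * Matrix.diagonal d := by rw [h1]
      have h3 : ∀ x y, d x * Gr x y = Gr y x * d y := by
        intro x y
        have := congrFun (congrFun h2 x) y
        simpa [Matrix.diagonal_mul, Matrix.mul_diagonal, Matrix.transpose_apply] using this
      intro x y
      rw [hP, hP]
      by_cases h : G.Adj y x
      · have h' : G.Adj x y := h.symm
        rw [if_pos h, if_pos h']
        have hx : d x ≠ 0 := ne_of_gt (hdpos h')
        have hy : d y ≠ 0 := ne_of_gt (hdpos h)
        have h4 := h3 x y
        simp only [hd] at hx hy h4
        rw [mul_one_div, mul_one_div, div_eq_div_iff hy hx]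
        linear_combination h4
      · have h' : ¬ G.Adj x y := fun hh => h hh.symm
        rw [if_neg h, if_neg h']
        ring
    · have hz : Gr = 0 := by rw [hGr]; exact Matrix.nonsing_inv_apply_not_isUnit _ hdet
      intro x y; simp [hz]
  set d : V → ℝ := fun x => κ x + (G.degree x : ℝ) with hd
  have hdpos : ∀ {x y : V}, G.Adj x y → 0 < d x := by
    intro x y h
    have h1 : 0 < G.degree x := (G.degree_pos_iff_exists_adj x).mpr ⟨y, h⟩
    have h2 : (1 : ℝ) ≤ (G.degree x : ℝ) := by exact_mod_cast h1
    have := hκnn x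
    simp only [hd]; linarith
  -- trace expansion
  have htrace : ∀ β : ℝ, Matrix.trace (Gr.map Complex.ofReal * Eβ β)
      = ∑ x : V, ∑ y : V, ((Gr x y * P y x : ℝ) : ℂ)
          * (1 - Complex.exp (Complex.I * β * A y x)) := by
    intro β
    rw [Matrix.trace]
    simp only [Matrix.diag_apply, Matrix.mul_apply, Matrix.map_apply, hEβ, Matrix.sub_apply]
    refine Finset.sum_congr rfl fun x _ => Finset.sum_congr rfl fun y _ => ?_
    rw [hPβ, hP]
    by_cases h : G.Adj y x
    · rw [if_pos h, if_pos h]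
      have hy : d y ≠ 0 := ne_of_gt (hdpos h)
      have hyC : ((d y : ℝ) : ℂ) ≠ 0 := Complex.ofReal_ne_zero.mpr hy
      push_cast
      field_simp
    · rw [if_neg h, if_neg h]
      push_cast
      ring
  -- symmetrization
  have hswap : ∀ β : ℝ,
      (∑ x : V, ∑ y : V, ((Gr x y * P y x : ℝ) : ℂ) * Complex.exp (-(Complex.I * β * A y x)))
      = ∑ x : V, ∑ y : V, ((Gr x y * P y x : ℝ) : ℂ) * Complex.exp (Complex.I * β * A y x) := by
    intro β
    rw [Finset.sum_comm]
    refine Finset.sum_congr rfl fun x _ => Finset.sum_congr rfl fun y _ => ?_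
    rw [hsym y x]
    congr 1
    rw [hAskew x y]
    push_cast
    ring
  have hsym2 : ∀ β : ℝ,
      (∑ x : V, ∑ y : V, ((Gr x y * P y x : ℝ) : ℂ) * (1 - Complex.exp (Complex.I * β * A y x)))
      = ∑ x : V, ∑ y : V, (1/2 : ℂ) * ((Gr x y * P y x : ℝ) : ℂ)
          * (2 - Complex.exp (Complex.I * β * A y x) - Complex.exp (-(Complex.I * β * A y x))) := by
    intro β
    have expand : ∀ x y : V, (1/2 : ℂ) * ((Gr x y * P y x : ℝ) : ℂ)
        * (2 - Complex.exp (Complex.I * β * A y x) - Complex.exp (-(Complex.I * β * A y x)))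
        = ((Gr x y * P y x : ℝ) : ℂ) * (1 - Complex.exp (Complex.I * β * A y x))
          + (1/2 : ℂ) * (((Gr x y * P y x : ℝ) : ℂ) * Complex.exp (Complex.I * β * A y x)
              - ((Gr x y * P y x : ℝ) : ℂ) * Complex.exp (-(Complex.I * β * A y x))) := by
      intro x y; ring
    rw [Finset.sum_congr rfl fun x _ => Finset.sum_congr rfl fun y _ => expand x y]
    rw [Finset.sum_congr rfl fun x _ => Finset.sum_add_distrib, Finset.sum_add_distrib]
    have h12 := congrArg (fun z => (1/2 : ℂ) * z) (hswap β)
    simp only [Finset.mul_sum] at h12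
    rw [Finset.sum_congr rfl fun x _ => Finset.sum_congr rfl fun y _ =>
      (mul_sub (1/2 : ℂ) _ _)]
    rw [Finset.sum_congr rfl fun x _ => Finset.sum_sub_distrib _ _, Finset.sum_sub_distrib]
    rw [← h12]
    simp
  -- per term limit
  have hterm : ∀ x y : V, Tendsto (fun β : ℝ => ((β : ℂ) ^ 2)⁻¹ *
        ((1/2 : ℂ) * ((Gr x y * P y x : ℝ) : ℂ)
          * (2 - Complex.exp (Complex.I * β * A y x) - Complex.exp (-(Complex.I * β * A y x)))))
      (nhdsWithin 0 {0}ᶜ)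
      (nhds ((1/2 : ℂ) * ((Gr x y * P y x : ℝ) : ℂ) * ((A y x : ℝ) : ℂ) ^ 2)) := by
    intro x y
    have := (key_tendsto (A y x)).const_mul ((1/2 : ℂ) * ((Gr x y * P y x : ℝ) : ℂ))
    refine this.congr fun β => ?_
    ring
  have hsum : Tendsto (fun β : ℝ => ∑ x : V, ∑ y : V, ((β : ℂ) ^ 2)⁻¹ *
        ((1/2 : ℂ) * ((Gr x y * P y x : ℝ) : ℂ)
          * (2 - Complex.exp (Complex.I * β * A y x) - Complex.exp (-(Complex.I * β * A y x)))))
      (nhdsWithin 0 {0}ᶜ)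
      (nhds (∑ x : V, ∑ y : V,
        (1/2 : ℂ) * ((Gr x y * P y x : ℝ) : ℂ) * ((A y x : ℝ) : ℂ) ^ 2)) := by
    refine tendsto_finset_sum _ fun x _ => tendsto_finset_sum _ fun y _ => hterm x y
  -- identify the limit value
  have hval : (((1 / 2 : ℝ) * Matrix.trace ((P ⊙ (A ⊙ A)) * Gr) : ℝ) : ℂ)
      = ∑ x : V, ∑ y : V,
        (1/2 : ℂ) * ((Gr x y * P y x : ℝ) : ℂ) * ((A y x : ℝ) : ℂ) ^ 2 := by
    rw [Matrix.trace]
    simp only [Matrix.diag_apply, Matrix.mul_apply, Matrix.hadamard_apply]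
    push_cast
    rw [Finset.mul_sum]
    rw [Finset.sum_comm]
    refine Finset.sum_congr rfl fun x _ => ?_
    rw [Finset.mul_sum]
    refine Finset.sum_congr rfl fun y _ => ?_
    ring
  rw [hval]
  refine hsum.congr fun β => ?_
  rw [htrace β, hsym2 β, Finset.mul_sum]
  refine Finset.sum_congr rfl fun x _ => ?_
  rw [Finset.mul_sum]
end

section
/- Let 𝒢 be a finite connected simple graph with killing function κ not identically zero and A a one-form on 𝒢. Set E^β = P − P^β. Then lim_{β→0} β^{−2} Tr(G E^β G E^β) = −Tr((P ⊙ A) G (P ⊙ A) G). -/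
open Matrix Filter

/-- Auxiliary scalar limit: `β⁻¹ (1/c - e^{iβa}/c) → -i (1/c · a)` as `β → 0`. -/
lemma aux_entry_tendsto (a c : ℝ) :
    Tendsto (fun β : ℝ => ((β:ℂ))⁻¹ * (((1/c:ℝ):ℂ) - Complex.exp (Complex.I * β * a) / ((c:ℝ):ℂ)))
      (nhdsWithin 0 {0}ᶜ) (nhds (-Complex.I * (((1/c*a : ℝ)):ℂ))) := by
  have h1 : HasDerivAt (fun β : ℝ => (β : ℂ)) 1 0 := by
    simpa using (hasDerivAt_id (0:ℝ)).ofReal_comp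
  have hd : HasDerivAt (fun β : ℝ => Complex.exp (Complex.I * β * a)) (Complex.I * a) 0 := by
    simpa using ((h1.const_mul Complex.I).mul_const (a:ℂ)).cexp
  have hs := hasDerivAt_iff_tendsto_slope.mp hd
  have h2 : Tendsto (fun β : ℝ =>
      -(slope (fun β : ℝ => Complex.exp (Complex.I * β * a)) 0 β) * ((c:ℂ))⁻¹)
      (nhdsWithin 0 {0}ᶜ) (nhds (-(Complex.I * a) * ((c:ℂ))⁻¹)) := (hs.neg).mul_const _
  have heq : ∀ β : ℝ,
      -(slope (fun β : ℝ => Complex.exp (Complex.I * β * a)) 0 β) * ((c:ℂ))⁻¹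
      = ((β:ℂ))⁻¹ * (((1/c:ℝ):ℂ) - Complex.exp (Complex.I * β * a) / ((c:ℝ):ℂ)) := by
    intro β
    simp only [slope, vsub_eq_sub, sub_zero, Complex.real_smul, Complex.ofReal_inv,
      Complex.ofReal_zero, mul_zero, zero_mul, Complex.exp_zero]
    push_cast
    ring
  have hval : -(Complex.I * a) * ((c:ℂ))⁻¹ = -Complex.I * (((1/c*a : ℝ)):ℂ) := by
    push_cast; ring
  rw [← hval]
  exact h2.congr heq

/-- With `E^β = P - P^β`,
`lim_{β→0} β⁻² Tr(G E^β G E^β) = - Tr((P ⊙ A) G (P ⊙ A) G)`. -/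
theorem tendsto_trace_green_perturbation_sq_div_sq
    {V : Type*} [Fintype V] [DecidableEq V]
    (G : SimpleGraph V) [DecidableRel G.Adj] (hconn : G.Connected)
    (κ : V → ℝ) (hκnn : ∀ x, 0 ≤ κ x) (hκ : κ ≠ 0)
    (P : Matrix V V ℝ)
    (hP : ∀ x y, P x y = if G.Adj x y then 1 / (κ x + (G.degree x : ℝ)) else 0)
    (Gr : Matrix V V ℝ) (hGr : Gr = (1 - P)⁻¹)
    (A : Matrix V V ℝ)
    (hAskew : ∀ x y, A x y = - A y x)
    (hAsupp : ∀ x y, ¬ G.Adj x y → A x y = 0)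
    (Pβ : ℝ → Matrix V V ℂ)
    (hPβ : ∀ β x y, Pβ β x y =
      if G.Adj x y then Complex.exp (Complex.I * β * A x y) / ((κ x + (G.degree x : ℝ) : ℝ) : ℂ)
      else 0)
    (Eβ : ℝ → Matrix V V ℂ) (hEβ : ∀ β, Eβ β = P.map Complex.ofReal - Pβ β) :
    Tendsto
      (fun β : ℝ => ((β : ℂ) ^ 2)⁻¹ *
        Matrix.trace (Gr.map Complex.ofReal * Eβ β * Gr.map Complex.ofReal * Eβ β))
      (nhdsWithin 0 {0}ᶜ)
      (nhds ((- Matrix.trace ((P ⊙ A) * Gr * (P ⊙ A) * Gr) : ℝ) : ℂ)) := by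
  have hQ : ∀ x y, ((P ⊙ A).map Complex.ofReal) x y
      = (((P ⊙ A) x y : ℝ) : ℂ) := fun x y => rfl
  -- Step 1: entrywise convergence of β⁻¹ • Eβ β to (-I) • (P ⊙ A)
  have hEtend : Tendsto (fun β : ℝ => ((β:ℂ))⁻¹ • Eβ β) (nhdsWithin 0 {0}ᶜ)
      (nhds ((-Complex.I) • ((P ⊙ A).map Complex.ofReal))) := by
    apply tendsto_pi_nhds.mpr
    intro x
    apply tendsto_pi_nhds.mpr
    intro y
    by_cases h : G.Adj x y
    · have hfun : ∀ β : ℝ, (((β:ℂ))⁻¹ • Eβ β) x y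
          = ((β:ℂ))⁻¹ * (((1/(κ x + (G.degree x : ℝ)):ℝ):ℂ)
            - Complex.exp (Complex.I * β * A x y) / (((κ x + (G.degree x : ℝ)):ℝ):ℂ)) := by
        intro β
        simp [hEβ β, hPβ β, hP x y, h, Matrix.map_apply]
      have hval : ((-Complex.I) • ((P ⊙ A).map Complex.ofReal)) x y
          = -Complex.I * (((1/(κ x + (G.degree x : ℝ)) * A x y : ℝ)):ℂ) := by
        simp [Matrix.map_apply, Matrix.hadamard, hP x y, h]
      rw [funext hfun, hval]
      exact aux_entry_tendsto (A x y) (κ x + (G.degree x : ℝ))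
    · have hfun : ∀ β : ℝ, (((β:ℂ))⁻¹ • Eβ β) x y = 0 := by
        intro β
        simp [hEβ β, hPβ β, hP x y, h, Matrix.map_apply]
      have hval : ((-Complex.I) • ((P ⊙ A).map Complex.ofReal)) x y = 0 := by
        simp [Matrix.map_apply, Matrix.hadamard, hP x y, h]
      rw [funext hfun, hval]
      exact tendsto_const_nhds
  -- Step 2: continuity of the trace expression
  have hT : Continuous (fun M : Matrix V V ℂ =>
      Matrix.trace (Gr.map Complex.ofReal * M * Gr.map Complex.ofReal * M)) := by
    exact (((continuous_const.matrix_mul continuous_id).matrix_mul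
      continuous_const).matrix_mul continuous_id).matrix_trace
  have hcomp := (hT.tendsto _).comp hEtend
  -- Step 3: identify the composed function with the original one
  have hfuneq : (fun β : ℝ => Matrix.trace (Gr.map Complex.ofReal * (((β:ℂ))⁻¹ • Eβ β) *
        Gr.map Complex.ofReal * (((β:ℂ))⁻¹ • Eβ β)))
      = fun β : ℝ => ((β : ℂ) ^ 2)⁻¹ *
        Matrix.trace (Gr.map Complex.ofReal * Eβ β * Gr.map Complex.ofReal * Eβ β) := by
    funext β
    simp only [Matrix.mul_smul, Matrix.smul_mul, smul_smul, Matrix.trace_smul, smul_eq_mul]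
    rw [pow_two, mul_inv]
  -- Step 4: identify the limit value
  have hvaleq : Matrix.trace (Gr.map Complex.ofReal *
        ((-Complex.I) • ((P ⊙ A).map Complex.ofReal)) * Gr.map Complex.ofReal *
        ((-Complex.I) • ((P ⊙ A).map Complex.ofReal)))
      = ((- Matrix.trace ((P ⊙ A) * Gr * (P ⊙ A) * Gr) : ℝ) : ℂ) := by
    simp only [Matrix.mul_smul, Matrix.smul_mul, smul_smul, Matrix.trace_smul, smul_eq_mul]
    have hmul : (-Complex.I) * (-Complex.I) = -1 := by
      rw [neg_mul_neg, Complex.I_mul_I]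
    rw [hmul]
    have hmap : Gr.map Complex.ofReal * (P ⊙ A).map Complex.ofReal *
        Gr.map Complex.ofReal * (P ⊙ A).map Complex.ofReal
        = (Gr * (P ⊙ A) * Gr * (P ⊙ A)).map Complex.ofReal := by
      have hc : ∀ M : Matrix V V ℝ, M.map Complex.ofReal = M.map Complex.ofRealHom := fun _ => rfl
      simp only [hc, ← Matrix.map_mul]
    rw [hmap]
    have htr : Matrix.trace ((Gr * (P ⊙ A) * Gr * (P ⊙ A)).map Complex.ofReal)
        = ((Matrix.trace (Gr * (P ⊙ A) * Gr * (P ⊙ A)) : ℝ) : ℂ) := by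
      simp [Matrix.trace, Matrix.diag, Matrix.map_apply]
    rw [htr]
    have hcyc : Matrix.trace (Gr * (P ⊙ A) * Gr * (P ⊙ A))
        = Matrix.trace ((P ⊙ A) * Gr * (P ⊙ A) * Gr) := by
      rw [Matrix.trace_mul_comm]
      simp [Matrix.mul_assoc]
    rw [hcyc]
    push_cast
    ring
  rw [← hfuneq]
  rw [hvaleq] at hcomp
  exact hcomp
end

section
/- Let 𝒢 be a finite connected simple graph with killing function κ not identically zero, A a one-form on 𝒢 and s ∈ ℝ. For λ > 0 let r(λ) = det(I − P^{s/√λ})/det(I − P). Then r(λ) → 1 as λ → ∞, and lim_{λ→∞} exp(−λ Log r(λ)) = exp( −(s²/2) [ Tr((P ⊙ A^{⊙2}) G) + Tr((P ⊙ A) G (P ⊙ A) G) ] ), where Log denotes the principal branch of the complex logarithm. (This is the limiting characteristic function of λ^{−1/2} Σ_{γ∈L^λ} ∫_γ A as the loop-soup intensity λ tends to infinity, i.e., the central limit theorem for loop variables.) -/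
open Matrix Filter

open Matrix

theorem det_hasDerivAt' {n : Type*} [Fintype n] [DecidableEq n]
    {M : ℂ → Matrix n n ℂ} {M' : Matrix n n ℂ} {z₀ : ℂ}
    (h : ∀ i j, HasDerivAt (fun z => M z i j) (M' i j) z₀) :
    HasDerivAt (fun z => (M z).det) ((Matrix.adjugate (M z₀) * M').trace) z₀ := by
  have e : ∀ z, (M z).det =
      ∑ σ : Equiv.Perm n, (Equiv.Perm.sign σ : ℂ) * ∏ i, M z (σ i) i := fun z =>
    Matrix.det_apply' (M z)
  have hder : HasDerivAt (fun z => ∑ σ : Equiv.Perm n, (Equiv.Perm.sign σ : ℂ) * ∏ i, M z (σ i) i)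
      (∑ σ : Equiv.Perm n, (Equiv.Perm.sign σ : ℂ) *
        (∑ i, (∏ j ∈ Finset.univ.erase i, M z₀ (σ j) j) • M' (σ i) i)) z₀ := by
    apply HasDerivAt.fun_sum
    intro σ _
    exact (HasDerivAt.fun_finsetProd (fun i _ => h (σ i) i)).const_mul _
  rw [funext e] at *
  convert hder using 1
  -- now the value identity
  have hdet : ∀ i : n, (Matrix.updateCol (M z₀) i (fun k => M' k i)).det =
      ∑ σ : Equiv.Perm n, (Equiv.Perm.sign σ : ℂ) *
        (M' (σ i) i * ∏ j ∈ Finset.univ.erase i, M z₀ (σ j) j) := by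
    intro i
    rw [Matrix.det_apply']
    refine Finset.sum_congr rfl fun σ _ => ?_
    congr 1
    rw [← Finset.mul_prod_erase _ _ (Finset.mem_univ i)]
    congr 1
    · simp [Matrix.updateCol_apply]
    · exact Finset.prod_congr rfl fun j hj => by
        simp [Matrix.updateCol_apply, Finset.ne_of_mem_erase hj]
  have htr : (Matrix.adjugate (M z₀) * M').trace
      = ∑ i : n, (Matrix.updateCol (M z₀) i (fun k => M' k i)).det := by
    simp only [← Matrix.cramer_apply, Matrix.cramer_eq_adjugate_mulVec]
    simp [Matrix.trace, Matrix.diag, Matrix.mul_apply, Matrix.mulVec, dotProduct]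
  rw [htr]
  simp only [hdet, smul_eq_mul]
  rw [Finset.sum_comm]
  refine Finset.sum_congr rfl fun σ _ => ?_
  rw [Finset.mul_sum]
  exact Finset.sum_congr rfl fun i _ => by ring

theorem deg_add_kappa_pos {V : Type*} [Fintype V] [DecidableEq V]
    (G : SimpleGraph V) [DecidableRel G.Adj] (hconn : G.Connected)
    (κ : V → ℝ) (hκnn : ∀ x, 0 ≤ κ x) (hκ : κ ≠ 0) (x : V) :
    0 < κ x + (G.degree x : ℝ) := by
  rcases lt_or_eq_of_le (hκnn x) with h | h
  · positivity
  · rw [← h, zero_add]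
    norm_cast
    rw [G.degree_pos_iff_exists_adj]
    obtain ⟨x₀, hx₀⟩ := Function.ne_iff.mp hκ
    have hne : x ≠ x₀ := by rintro rfl; exact hx₀ (by simpa using h.symm)
    obtain ⟨w⟩ := hconn.preconnected x x₀
    cases w with
    | nil => exact absurd rfl hne
    | cons h p => exact ⟨_, h⟩

theorem det_one_sub_P_ne_zero {V : Type*} [Fintype V] [DecidableEq V]
    (G : SimpleGraph V) [DecidableRel G.Adj] (hconn : G.Connected)
    (κ : V → ℝ) (hκnn : ∀ x, 0 ≤ κ x) (hκ : κ ≠ 0)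
    (P : Matrix V V ℝ)
    (hP : ∀ x y, P x y = if G.Adj x y then 1 / (κ x + (G.degree x : ℝ)) else 0) :
    (1 - P).det ≠ 0 := by
  set d : V → ℝ := fun x => κ x + (G.degree x : ℝ) with hd
  have hdpos : ∀ x, 0 < d x := deg_add_kappa_pos G hconn κ hκnn hκ
  set W : Matrix V V ℝ := fun x y => if G.Adj x y then 1 else 0 with hW
  have hWnn : ∀ x y, 0 ≤ W x y := fun x y => by rw [hW]; dsimp only; split <;> norm_num
  intro h0
  obtain ⟨v, hv, hveq⟩ := (Matrix.exists_mulVec_eq_zero_iff).mpr h0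
  have hpt : ∀ x, d x * v x = ∑ y, W x y * v y := by
    intro x
    have h2 := congrFun hveq x
    simp only [Matrix.mulVec, dotProduct, Matrix.sub_apply, Matrix.one_apply, sub_mul,
      Finset.sum_sub_distrib, Pi.zero_apply] at h2
    have h3 : v x - ∑ y, P x y * v y = 0 := by
      simpa [Finset.sum_ite_eq, eq_comm] using h2
    have h4 : ∑ y, W x y * v y = d x * ∑ y, P x y * v y := by
      rw [Finset.mul_sum]
      refine Finset.sum_congr rfl fun y _ => ?_
      rw [hP, hW]
      by_cases hxy : G.Adj x y
      · simp only [hxy, if_true, one_mul, ← mul_assoc, mul_one_div]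
        rw [show κ x + (G.degree x : ℝ) = d x from rfl, div_self (hdpos x).ne', one_mul]
      · simp [hxy]
    rw [h4, sub_eq_zero.mp h3]
  have hWrow : ∀ x, ∑ y, W x y = (G.degree x : ℝ) := by
    intro x
    rw [hW]
    simp only [Finset.sum_boole]
    norm_cast
    rw [← SimpleGraph.neighborFinset_eq_filter]
    rfl
  have hWsymm : ∀ x y, W x y = W y x := by
    intro x y; rw [hW]; simp [SimpleGraph.adj_comm]
  set K := ∑ x, κ x * v x ^ 2 with hK
  set T := ∑ x, ∑ y, W x y * (v x - v y) ^ 2 with hT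
  have hKnn : 0 ≤ K := Finset.sum_nonneg fun x _ => by have := hκnn x; positivity
  have hTnn : 0 ≤ T := Finset.sum_nonneg fun x _ => Finset.sum_nonneg fun y _ =>
    mul_nonneg (hWnn x y) (sq_nonneg _)
  have swap2 : ∑ x, ∑ y, W x y * v y ^ 2 = ∑ x, (G.degree x : ℝ) * v x ^ 2 := by
    rw [Finset.sum_comm]
    refine Finset.sum_congr rfl fun y _ => ?_
    rw [← Finset.sum_mul, ← hWrow y]
    congr 1
    exact Finset.sum_congr rfl fun x _ => hWsymm x y
  have e1 : T = 2 * (∑ x, (G.degree x : ℝ) * v x ^ 2)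
      - 2 * ∑ x, ∑ y, W x y * (v x * v y) := by
    rw [hT]
    have step : ∀ x : V, ∑ y, W x y * (v x - v y) ^ 2
        = (∑ y, W x y * v x ^ 2) + (∑ y, W x y * v y ^ 2)
          - 2 * ∑ y, W x y * (v x * v y) := by
      intro x
      rw [Finset.mul_sum, ← Finset.sum_add_distrib, ← Finset.sum_sub_distrib]
      exact Finset.sum_congr rfl fun y _ => by ring
    simp only [step]
    rw [Finset.sum_sub_distrib, Finset.sum_add_distrib, swap2, ← Finset.mul_sum]
    have : ∀ x : V, ∑ y, W x y * v x ^ 2 = (G.degree x : ℝ) * v x ^ 2 := by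
      intro x; rw [← Finset.sum_mul, hWrow]
    simp only [this]
    ring
  have main : ∑ x, v x * (d x * v x - ∑ y, W x y * v y) = 0 :=
    Finset.sum_eq_zero fun x _ => by rw [hpt x]; ring
  have expand2 : ∑ x, v x * (d x * v x - ∑ y, W x y * v y)
      = K + (∑ x, (G.degree x : ℝ) * v x ^ 2) - ∑ x, ∑ y, W x y * (v x * v y) := by
    rw [hK, ← Finset.sum_add_distrib, ← Finset.sum_sub_distrib]
    refine Finset.sum_congr rfl fun x _ => ?_
    have hsum : v x * ∑ y, W x y * v y = ∑ y, W x y * (v x * v y) := by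
      rw [Finset.mul_sum]; exact Finset.sum_congr rfl fun y _ => by ring
    rw [hd, mul_sub, hsum]
    ring
  have key : 2 * K + T = 0 := by
    rw [e1]
    have h5 : K + (∑ x, (G.degree x : ℝ) * v x ^ 2) - ∑ x, ∑ y, W x y * (v x * v y) = 0 := by
      rw [← expand2]; exact main
    linarith
  have hK0 : K = 0 := by linarith
  have hT0 : T = 0 := by linarith
  have hstep : ∀ a b, G.Adj a b → v a = v b := by
    intro a b hab
    have h1 : ∀ x ∈ Finset.univ, (0:ℝ) ≤ ∑ y, W x y * (v x - v y) ^ 2 :=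
      fun x _ => Finset.sum_nonneg fun y _ => mul_nonneg (hWnn x y) (sq_nonneg _)
    have h2 := (Finset.sum_eq_zero_iff_of_nonneg h1).mp hT0 a (Finset.mem_univ a)
    have h3 : ∀ y ∈ Finset.univ, (0:ℝ) ≤ W a y * (v a - v y) ^ 2 :=
      fun y _ => mul_nonneg (hWnn a y) (sq_nonneg _)
    have h4 := (Finset.sum_eq_zero_iff_of_nonneg h3).mp h2 b (Finset.mem_univ b)
    rw [hW] at h4
    simp only [hab, if_true, one_mul] at h4
    have := pow_eq_zero_iff (n := 2) (by norm_num) |>.mp h4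
    linarith [this]
  have hwalk : ∀ a b : V, G.Walk a b → v a = v b := by
    intro a b w
    induction w with
    | nil => rfl
    | cons h p ih => exact (hstep _ _ h).trans ih
  obtain ⟨x₀, hx₀⟩ := Function.ne_iff.mp hκ
  have hvx₀ : v x₀ = 0 := by
    have h1 : ∀ x ∈ Finset.univ, (0:ℝ) ≤ κ x * v x ^ 2 := fun x _ => by
      have := hκnn x; positivity
    have h2 := (Finset.sum_eq_zero_iff_of_nonneg h1).mp hK0 x₀ (Finset.mem_univ x₀)
    have hκx₀ : κ x₀ ≠ 0 := by simpa using hx₀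
    have : v x₀ ^ 2 = 0 := by
      rcases mul_eq_zero.mp h2 with h | h
      · exact absurd h hκx₀
      · exact h
    exact pow_eq_zero_iff (n := 2) (by norm_num) |>.mp this
  apply hv
  funext x
  obtain ⟨w⟩ := hconn.preconnected x x₀
  rw [Pi.zero_apply, hwalk x x₀ w, hvx₀]

theorem trace_inv_skew_zero {V : Type*} [Fintype V] [DecidableEq V]
    (S K : Matrix V V ℝ) (hS : Sᵀ = S) (hK : Kᵀ = -K) (hdet : IsUnit S.det) :
    (S⁻¹ * K).trace = 0 := by
  have h1 : (S⁻¹ * K).trace = ((S⁻¹ * K)ᵀ).trace := (Matrix.trace_transpose _).symm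
  rw [Matrix.transpose_mul, hK, Matrix.transpose_nonsing_inv, hS] at h1
  rw [Matrix.neg_mul, Matrix.trace_neg] at h1
  have h3 : (S⁻¹ * K).trace = (K * S⁻¹).trace := Matrix.trace_mul_comm _ _
  linarith

theorem trace_Gr_hadamard_zero {V : Type*} [Fintype V] [DecidableEq V]
    (G : SimpleGraph V) [DecidableRel G.Adj]
    (κ : V → ℝ)
    (P : Matrix V V ℝ)
    (hP : ∀ x y, P x y = if G.Adj x y then 1 / (κ x + (G.degree x : ℝ)) else 0)
    (hdpos : ∀ x, 0 < κ x + (G.degree x : ℝ))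
    (hdet : (1 - P).det ≠ 0)
    (Gr : Matrix V V ℝ) (hGr : Gr = (1 - P)⁻¹)
    (A : Matrix V V ℝ)
    (hAskew : ∀ x y, A x y = - A y x) :
    (Gr * (P ⊙ A)).trace = 0 := by
  set d : V → ℝ := fun x => κ x + (G.degree x : ℝ) with hd
  have hDP : ∀ x y, d x * P x y = if G.Adj x y then 1 else 0 := by
    intro x y
    rw [hP]
    by_cases hxy : G.Adj x y
    · simp only [hxy, if_true, mul_one_div]
      rw [show κ x + (G.degree x : ℝ) = d x from rfl, div_self (hdpos x).ne']
    · simp [hxy]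
  set S : Matrix V V ℝ := Matrix.diagonal d * (1 - P) with hSdef
  set K : Matrix V V ℝ := Matrix.diagonal d * (P ⊙ A) with hKdef
  have hSapp : ∀ x y, S x y = d x * (1 - P) x y := by
    intro x y; rw [hSdef]; simp [Matrix.diagonal_mul]
  have hKapp : ∀ x y, K x y = if G.Adj x y then A x y else 0 := by
    intro x y
    rw [hKdef]
    have : (Matrix.diagonal d * (P ⊙ A)) x y = d x * (P x y * A x y) := by
      simp [Matrix.diagonal_mul, Matrix.hadamard]
    rw [this, ← mul_assoc, hDP]
    by_cases hxy : G.Adj x y <;> simp [hxy]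
  have hdetS : IsUnit S.det := by
    rw [hSdef, Matrix.det_mul, Matrix.det_diagonal]
    exact (Finset.prod_pos (fun x _ => hdpos x)).ne'.isUnit.mul
      (isUnit_iff_ne_zero.mpr hdet)
  have hSsymm : Sᵀ = S := by
    ext x y
    rw [Matrix.transpose_apply, hSapp, hSapp]
    by_cases hxy : x = y
    · rw [hxy]
    · have h1 : (1 - P) y x = -P y x := by
        simp [Matrix.sub_apply, Matrix.one_apply, hxy, Ne.symm hxy]
      have h2 : (1 - P) x y = -P x y := by
        simp [Matrix.sub_apply, Matrix.one_apply, hxy]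
      rw [h1, h2, mul_neg, mul_neg, neg_inj, hDP, hDP]
      simp [SimpleGraph.adj_comm]
  have hKskew : Kᵀ = -K := by
    ext x y
    rw [Matrix.transpose_apply, Matrix.neg_apply, hKapp, hKapp]
    by_cases hxy : G.Adj x y
    · have hyx : G.Adj y x := hxy.symm
      simp [hxy, hyx, hAskew y x]
    · have hyx : ¬ G.Adj y x := fun h => hxy h.symm
      simp [hxy, hyx]
  have hmul : Gr * (P ⊙ A) = S⁻¹ * K := by
    have h1 : S * (Gr * (P ⊙ A)) = K := by
      rw [hSdef, hGr, Matrix.mul_assoc, ← Matrix.mul_assoc (1 - P),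
        Matrix.mul_nonsing_inv _ (isUnit_iff_ne_zero.mpr hdet), Matrix.one_mul, hKdef]
    rw [← h1, ← Matrix.mul_assoc, Matrix.nonsing_inv_mul _ hdetS, Matrix.one_mul]
  rw [hmul]
  exact trace_inv_skew_zero S K hSsymm hKskew hdetS

/-- CLT for loop variables: with `r(λ) = det(I - P^{s/√λ})/det(I - P)`,
`r(λ) → 1` and `exp(-λ Log r(λ)) →
  exp(-(s²/2)[Tr((P ⊙ A^{⊙2})G) + Tr((P ⊙ A)G(P ⊙ A)G)])` as `λ → ∞`. -/
theorem clt_one_form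
    {V : Type*} [Fintype V] [DecidableEq V]
    (G : SimpleGraph V) [DecidableRel G.Adj] (hconn : G.Connected)
    (κ : V → ℝ) (hκnn : ∀ x, 0 ≤ κ x) (hκ : κ ≠ 0)
    (P : Matrix V V ℝ)
    (hP : ∀ x y, P x y = if G.Adj x y then 1 / (κ x + (G.degree x : ℝ)) else 0)
    (Gr : Matrix V V ℝ) (hGr : Gr = (1 - P)⁻¹)
    (A : Matrix V V ℝ)
    (hAskew : ∀ x y, A x y = - A y x)
    (hAsupp : ∀ x y, ¬ G.Adj x y → A x y = 0)
    (Pβ : ℝ → Matrix V V ℂ)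
    (hPβ : ∀ β x y, Pβ β x y =
      if G.Adj x y then Complex.exp (Complex.I * β * A x y) / ((κ x + (G.degree x : ℝ) : ℝ) : ℂ)
      else 0)
    (s : ℝ)
    (r : ℝ → ℂ)
    (hr : ∀ lam : ℝ, r lam =
      Matrix.det (1 - Pβ (s / Real.sqrt lam)) / ((Matrix.det (1 - P) : ℝ) : ℂ)) :
    Tendsto r atTop (nhds 1) ∧
    Tendsto (fun lam : ℝ => Complex.exp (-(lam : ℂ) * Complex.log (r lam))) atTop
      (nhds (Complex.exp
        ((-(s ^ 2 / 2) *
          (Matrix.trace ((P ⊙ (A ⊙ A)) * Gr) +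
            Matrix.trace ((P ⊙ A) * Gr * (P ⊙ A) * Gr)) : ℝ) : ℂ))) := by
  classical
  have hdpos : ∀ x, 0 < κ x + (G.degree x : ℝ) := deg_add_kappa_pos G hconn κ hκnn hκ
  have hdet : (1 - P).det ≠ 0 := det_one_sub_P_ne_zero G hconn κ hκnn hκ P hP
  have hdetU : IsUnit (1 - P).det := isUnit_iff_ne_zero.mpr hdet
  have hGr1 : (1 - P) * Gr = 1 := by rw [hGr]; exact Matrix.mul_nonsing_inv _ hdetU
  have hGr2 : Gr * (1 - P) = 1 := by rw [hGr]; exact Matrix.nonsing_inv_mul _ hdetU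
  set F₀ : ℂ := (((1 - P).det : ℝ) : ℂ) with hF₀def
  have hF₀ne : F₀ ≠ 0 := by
    rw [hF₀def]; exact Complex.ofReal_ne_zero.mpr hdet
  set Grc : Matrix V V ℂ := Gr.map Complex.ofRealHom with hGrcdef
  set Bc : Matrix V V ℂ := (P ⊙ A).map Complex.ofRealHom with hBcdef
  set Cc : Matrix V V ℂ := (P ⊙ (A ⊙ A)).map Complex.ofRealHom with hCcdef
  set Mc : ℂ → Matrix V V ℂ := fun z x y =>
    if G.Adj x y then Complex.exp (Complex.I * z * A x y) / ((κ x + (G.degree x : ℝ) : ℝ) : ℂ)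
    else 0 with hMcdef
  set Md : ℂ → Matrix V V ℂ := fun z x y =>
    Complex.I * (A x y : ℂ) * Mc z x y with hMddef
  set M : ℂ → Matrix V V ℂ := fun z => 1 - Mc z with hMdef
  set F : ℂ → ℂ := fun z => (M z).det with hFdef
  have hMc0 : Mc 0 = P.map Complex.ofRealHom := by
    ext x y
    rw [hMcdef]
    simp only [Matrix.map_apply, hP x y, Complex.ofRealHom_eq_coe]
    by_cases hxy : G.Adj x y
    · simp [hxy]
    · simp [hxy]
  have hMder : ∀ (z : ℂ) (x y : V), HasDerivAt (fun w => Mc w x y) (Md z x y) z := by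
    intro z x y
    rw [hMddef]
    simp only [hMcdef]
    by_cases hxy : G.Adj x y
    · simp only [hxy, if_true]
      have h1 : HasDerivAt (fun w : ℂ => Complex.I * w * (A x y : ℂ))
          (Complex.I * (A x y : ℂ)) z := by
        simpa using ((hasDerivAt_id z).const_mul Complex.I).mul_const ((A x y : ℂ))
      have h2 := (h1.cexp).div_const ((κ x + (G.degree x : ℝ) : ℝ) : ℂ)
      refine h2.congr_deriv ?_
      ring
    · simp only [hxy, if_false, mul_zero]
      exact hasDerivAt_const z (0:ℂ)
  have hM'entry : ∀ (z : ℂ) (x y : V), HasDerivAt (fun w => M w x y) ((-(Md z)) x y) z := by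
    intro z x y
    have h1 : (fun w => M w x y) = fun w => (1 : Matrix V V ℂ) x y - Mc w x y := by
      funext w; rw [hMdef]; simp [Matrix.sub_apply]
    rw [h1]
    have := (hasDerivAt_const z ((1 : Matrix V V ℂ) x y)).fun_sub (hMder z x y)
    simpa using this
  set ψ : ℂ → ℂ := fun z => (Matrix.adjugate (M z) * (-(Md z))).trace with hψdef
  have hFder : ∀ z, HasDerivAt F (ψ z) z := fun z =>
    det_hasDerivAt' (fun i j => hM'entry z i j)
  have hM0 : M 0 = (1 - P).map Complex.ofRealHom := by
    rw [hMdef]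
    simp only [hMc0]
    ext x y
    by_cases hxy : x = y <;>
      simp [Matrix.map_apply, Matrix.sub_apply, Matrix.one_apply, hxy]
  have hF0 : F 0 = F₀ := by
    rw [hFdef]
    simp only [hM0, hF₀def]
    rw [show (1 - P).map ⇑Complex.ofRealHom = Complex.ofRealHom.mapMatrix (1 - P) from rfl,
      ← RingHom.map_det]
    rfl
  have hdetM0 : (M 0).det ≠ 0 := by
    have h : (M 0).det = F 0 := rfl
    rw [h, hF0]; exact hF₀ne
  have hM0U : IsUnit (M 0).det := isUnit_iff_ne_zero.mpr hdetM0
  have hM0Grc : M 0 * Grc = 1 := by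
    rw [hM0, hGrcdef, ← Matrix.map_mul, hGr1, Matrix.map_one _ (map_zero _) (map_one _)]
  have hGrcM0 : Grc * M 0 = 1 := by
    rw [hM0, hGrcdef, ← Matrix.map_mul, hGr2, Matrix.map_one _ (map_zero _) (map_one _)]
  have hGrcInv : (M 0)⁻¹ = Grc := Matrix.inv_eq_right_inv hM0Grc
  have hadjM0 : Matrix.adjugate (M 0) = F₀ • Grc := by
    have h1 : (M 0)⁻¹ = Ring.inverse (M 0).det • Matrix.adjugate (M 0) := Matrix.inv_def _
    have h2 : Matrix.adjugate (M 0)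
        = ((M 0).det * Ring.inverse (M 0).det) • Matrix.adjugate (M 0) := by
      rw [Ring.mul_inverse_cancel _ hM0U, one_smul]
    rw [h2, ← smul_smul, ← h1, hGrcInv, show (M 0).det = F₀ from hF0]
  have hMd0 : Md 0 = Complex.I • Bc := by
    ext x y
    rw [hMddef]
    simp only [hMc0, hBcdef, Matrix.smul_apply, Matrix.map_apply, Matrix.hadamard_apply,
      Complex.ofRealHom_eq_coe, smul_eq_mul]
    push_cast
    ring
  have htrmap : ∀ X : Matrix V V ℝ, (X.map Complex.ofRealHom).trace = ((X.trace : ℝ) : ℂ) := by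
    intro X
    simp [Matrix.trace, Matrix.diag, Matrix.map_apply]
  have hψ0 : ψ 0 = 0 := by
    rw [hψdef]
    simp only [hadjM0, hMd0]
    have h1 : (F₀ • Grc) * -(Complex.I • Bc) = (-(F₀ * Complex.I)) • (Grc * Bc) := by
      rw [Matrix.mul_neg, Matrix.smul_mul, Matrix.mul_smul, smul_smul, ← neg_smul]
    rw [h1, Matrix.trace_smul]
    have h2 : (Grc * Bc).trace = 0 := by
      rw [hGrcdef, hBcdef, ← Matrix.map_mul, htrmap,
        trace_Gr_hadamard_zero G κ P hP hdpos hdet Gr hGr A hAskew]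
      simp
    rw [h2, smul_zero]
  set N : ℂ → Matrix V V ℂ := fun z => (M z)⁻¹ with hNdef
  have hN0 : N 0 = Grc := by rw [hNdef]; exact hGrcInv
  have hFcont : ContinuousAt F 0 := (hFder 0).continuousAt
  have hU : ∀ᶠ z in nhds (0:ℂ), (M z).det ≠ 0 := hFcont.eventually_ne hdetM0
  have hadjder : ∀ (x y : V), DifferentiableAt ℂ (fun z => Matrix.adjugate (M z) x y) 0 := by
    intro x y
    have h1 : ∀ z : ℂ, Matrix.adjugate (M z) x y
        = ((M z).updateRow y (Pi.single x 1)).det := fun z => Matrix.adjugate_apply _ _ _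
    have h2 : ∀ a b : V, HasDerivAt (fun z => (M z).updateRow y (Pi.single x 1) a b)
        (((-(Md 0)).updateRow y 0) a b) 0 := by
      intro a b
      by_cases hay : a = y
      · subst hay
        simp only [Matrix.updateRow_apply, if_pos rfl]
        simpa using hasDerivAt_const (0:ℂ) ((Pi.single x (1:ℂ) : V → ℂ) b)
      · simp only [Matrix.updateRow_apply, if_neg hay]
        exact hM'entry 0 a b
    simp only [h1]
    exact (det_hasDerivAt' h2).differentiableAt
  have hNentry : ∀ (z : ℂ) (x y : V), N z x y = (F z)⁻¹ * Matrix.adjugate (M z) x y := by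
    intro z x y
    rw [hNdef]
    simp only []
    rw [Matrix.inv_def, Matrix.smul_apply, smul_eq_mul, Ring.inverse_eq_inv]
  have hFne0 : F 0 ≠ 0 := by rw [hF0]; exact hF₀ne
  have hNdiff : ∀ x y : V, DifferentiableAt ℂ (fun z => N z x y) 0 := by
    intro x y
    simp only [hNentry]
    exact ((hFder 0).differentiableAt.inv hFne0).mul (hadjder x y)
  set n' : Matrix V V ℂ := Matrix.of (fun x y => deriv (fun z => N z x y) 0) with hn'def
  have hNder : ∀ x y : V, HasDerivAt (fun z => N z x y) (n' x y) 0 := fun x y =>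
    (hNdiff x y).hasDerivAt
  have hn' : n' = Complex.I • (Grc * Bc * Grc) := by
    have hMat : (-(Md 0)) * Grc + M 0 * n' = 0 := by
      ext x y
      have hgev : (fun z => ∑ k, M z x k * N z k y) =ᶠ[nhds (0:ℂ)]
          (fun _ => (1 : Matrix V V ℂ) x y) := by
        filter_upwards [hU] with z hz
        rw [← Matrix.mul_apply, Matrix.mul_nonsing_inv _ (isUnit_iff_ne_zero.mpr hz)]
      have hg1 : HasDerivAt (fun z => ∑ k, M z x k * N z k y)
          (∑ k, ((-(Md 0)) x k * N 0 k y + M 0 x k * n' k y)) 0 :=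
        HasDerivAt.fun_sum fun k _ => (hM'entry 0 x k).fun_mul (hNder k y)
      rw [hN0] at hg1
      have hg2 : HasDerivAt (fun z => ∑ k, M z x k * N z k y) 0 0 :=
        (hasDerivAt_const (0:ℂ) ((1 : Matrix V V ℂ) x y)).congr_of_eventuallyEq hgev
      have h3 := hg1.unique hg2
      rw [Matrix.add_apply, Matrix.mul_apply, Matrix.mul_apply, ← Finset.sum_add_distrib,
        Matrix.zero_apply]
      exact h3
    have hMat' : M 0 * n' = -((-(Md 0)) * Grc) := eq_neg_of_add_eq_zero_right hMat
    calc n' = (Grc * M 0) * n' := by rw [hGrcM0, Matrix.one_mul]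
    _ = Grc * (M 0 * n') := Matrix.mul_assoc _ _ _
    _ = Grc * (Md 0 * Grc) := by rw [hMat', Matrix.neg_mul, neg_neg]
    _ = Complex.I • (Grc * Bc * Grc) := by
        rw [hMd0, Matrix.smul_mul, Matrix.mul_smul, Matrix.mul_assoc]
  have hadjder0 : ∀ x y : V, HasDerivAt (fun z => Matrix.adjugate (M z) x y)
      (F₀ * n' x y) 0 := by
    intro x y
    have hev : (fun z => Matrix.adjugate (M z) x y) =ᶠ[nhds (0:ℂ)]
        (fun z => F z * N z x y) := by
      filter_upwards [hU] with z hz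
      rw [hNentry, ← mul_assoc, mul_inv_cancel₀ hz, one_mul]
    have h2 : HasDerivAt (fun z => F z * N z x y) (ψ 0 * N 0 x y + F 0 * n' x y) 0 :=
      (hFder 0).mul (hNder x y)
    rw [hψ0, hF0, zero_mul, zero_add] at h2
    exact h2.congr_of_eventuallyEq hev
  have hCc_apply : ∀ x y : V, Cc x y = ((P x y * (A x y * A x y) : ℝ) : ℂ) := by
    intro x y
    rw [hCcdef]
    simp [Matrix.map_apply, Matrix.hadamard_apply]
  have hCder : ∀ x y : V, HasDerivAt (fun z => -(Md z x y)) (Cc x y) 0 := by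
    intro x y
    have h1 : (fun z => -(Md z x y)) = fun z => -(Complex.I * (A x y : ℂ) * Mc z x y) := by
      funext z; rw [hMddef]
    rw [h1]
    have h2 := ((hMder 0 x y).const_mul (Complex.I * (A x y : ℂ))).fun_neg
    refine h2.congr_deriv ?_
    rw [hCc_apply, hMddef]
    simp only [hMc0, Matrix.map_apply, Complex.ofRealHom_eq_coe]
    push_cast
    ring_nf
    rw [show (Complex.I : ℂ) ^ 2 = -1 from by rw [sq]; exact Complex.I_mul_I]
    ring
  set Tc : ℂ := (Grc * Cc).trace + (Grc * Bc * Grc * Bc).trace with hTcdef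
  have hψder : HasDerivAt ψ (F₀ * Tc) 0 := by
    have hψeq : ψ = fun z => ∑ x, ∑ k, Matrix.adjugate (M z) x k * (-(Md z k x)) := by
      funext z
      rw [hψdef]
      simp only [Matrix.trace, Matrix.diag, Matrix.mul_apply, Matrix.neg_apply]
    rw [hψeq]
    have h1 : HasDerivAt (fun z => ∑ x : V, ∑ k : V, Matrix.adjugate (M z) x k * (-(Md z k x)))
        (∑ x : V, ∑ k : V, (F₀ * n' x k * (-(Md 0 k x)) + Matrix.adjugate (M 0) x k * Cc k x))
        0 := HasDerivAt.fun_sum fun x _ => HasDerivAt.fun_sum fun k _ => (hadjder0 x k).fun_mul (hCder k x)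
    convert h1 using 1
    have hprod : n' * (-(Md 0)) = Grc * Bc * Grc * Bc := by
      rw [hn', hMd0, Matrix.mul_neg, Matrix.smul_mul, Matrix.mul_smul, smul_smul,
        Complex.I_mul_I, neg_smul, neg_neg, one_smul]
    have t1 : (Grc * Bc * Grc * Bc).trace = ∑ x : V, ∑ k : V, n' x k * (-(Md 0 k x)) := by
      rw [← hprod]
      simp only [Matrix.trace, Matrix.diag, Matrix.mul_apply, Matrix.neg_apply]
    have t2 : (Grc * Cc).trace = ∑ x : V, ∑ k : V, Grc x k * Cc k x := by
      simp only [Matrix.trace, Matrix.diag, Matrix.mul_apply]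
    rw [hTcdef, t1, t2, mul_add, Finset.mul_sum, Finset.mul_sum, ← Finset.sum_add_distrib]
    refine Finset.sum_congr rfl fun x _ => ?_
    rw [Finset.mul_sum, Finset.mul_sum, ← Finset.sum_add_distrib]
    refine Finset.sum_congr rfl fun k _ => ?_
    rw [hadjM0, Matrix.smul_apply, smul_eq_mul]
    ring
  -- the log function and its expansion
  set Gg : ℂ → ℂ := fun z => Complex.log (F z / F₀) with hGgdef
  have hGganal : AnalyticAt ℂ Gg 0 := by
    have h1 : AnalyticAt ℂ F 0 := by
      have : Differentiable ℂ F := fun z => (hFder z).differentiableAt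
      exact this.analyticAt 0
    have h2 : AnalyticAt ℂ (fun z => F z / F₀) 0 := h1.div analyticAt_const hF₀ne
    apply AnalyticAt.clog h2
    rw [hF0, div_self hF₀ne]
    exact Complex.one_mem_slitPlane
  have hGg0 : Gg 0 = 0 := by
    rw [hGgdef]
    simp only [hF0, div_self hF₀ne, Complex.log_one]
  have hGgev : ∀ᶠ z in nhds (0:ℂ), HasDerivAt Gg (ψ z / F z) z := by
    have hslit : ∀ᶠ z in nhds (0:ℂ), F z / F₀ ∈ Complex.slitPlane := by
      have hcont : ContinuousAt (fun z => F z / F₀) 0 := hFcont.div continuousAt_const hF₀ne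
      have hmem : (fun z => F z / F₀) 0 ∈ Complex.slitPlane := by
        simp only [hF0, div_self hF₀ne]
        exact Complex.one_mem_slitPlane
      exact hcont.eventually_mem (Complex.isOpen_slitPlane.mem_nhds hmem)
    filter_upwards [hU, hslit] with z hz hz2
    have h1 : HasDerivAt (fun w => F w / F₀) (ψ z / F₀) z := (hFder z).div_const F₀
    have h2 := h1.clog hz2
    have hFzne : F z ≠ 0 := hz
    have h3 : ψ z / F₀ / (F z / F₀) = ψ z / F z := by
      field_simp
    rw [h3] at h2
    exact h2
  have hderivGg : deriv Gg =ᶠ[nhds (0:ℂ)] fun z => ψ z / F z := by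
    filter_upwards [hGgev] with z hz
    exact hz.deriv
  have hd1 : deriv Gg 0 = 0 := by
    have := hGgev.self_of_nhds
    rw [this.deriv, hψ0, zero_div]
  have hd2 : deriv (deriv Gg) 0 = Tc := by
    rw [hderivGg.deriv_eq]
    have h1 : HasDerivAt (fun z => ψ z / F z)
        ((F₀ * Tc * F 0 - ψ 0 * ψ 0) / F 0 ^ 2) 0 := hψder.div (hFder 0) hFne0
    rw [h1.deriv, hψ0, hF0, mul_zero, sub_zero, pow_two,
      div_eq_iff (mul_ne_zero hF₀ne hF₀ne)]
    ring
  -- power series coefficients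
  obtain ⟨p, hp⟩ := hGganal
  have hc0 : p.coeff 0 = Gg 0 := hp.coeff_zero 1
  have hc1 : p.coeff 1 = 0 := by
    have := hp.deriv
    rw [hd1] at this
    exact this.symm
  have hc2 : p.coeff 2 = Tc / 2 := by
    obtain ⟨rad, hball⟩ := hp
    have hfact := hball.factorial_smul (y := (1:ℂ)) 2
    have hit : iteratedFDeriv ℂ 2 Gg 0 (fun _ => (1:ℂ)) = deriv (deriv Gg) 0 := by
      rw [← iteratedDeriv_eq_iteratedFDeriv, iteratedDeriv_succ, iteratedDeriv_one]
    rw [hit, hd2] at hfact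
    have hcoe : p 2 (fun _ => (1:ℂ)) = p.coeff 2 := by
      rw [FormalMultilinearSeries.apply_eq_pow_smul_coeff]
      simp
    rw [hcoe] at hfact
    have h2 : (2:ℂ) * p.coeff 2 = Tc := by
      rw [← hfact]
      norm_num [Nat.factorial, nsmul_eq_mul]
    rw [eq_div_iff (by norm_num : (2:ℂ) ≠ 0)]
    linear_combination h2
  -- Taylor expansion limit
  have hlim : Tendsto (fun y : ℂ => Gg y / y ^ 2) (nhdsWithin 0 {0}ᶜ) (nhds (Tc / 2)) := by
    have hPS : ∀ y : ℂ, p.partialSum 3 y = y ^ 2 * (Tc / 2) := by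
      intro y
      rw [FormalMultilinearSeries.partialSum]
      rw [Finset.sum_range_succ, Finset.sum_range_succ, Finset.sum_range_one]
      simp only [FormalMultilinearSeries.apply_eq_pow_smul_coeff, hc0, hGg0, hc1, hc2,
        smul_eq_mul]
      ring
    have hBigO := hp.isBigO_sub_partialSum_pow 3
    simp only [zero_add] at hBigO
    rw [Asymptotics.isBigO_iff] at hBigO
    obtain ⟨C, hC⟩ := hBigO
    have hbound : ∀ᶠ y in nhdsWithin (0:ℂ) {0}ᶜ, ‖Gg y / y ^ 2 - Tc / 2‖ ≤ C * ‖y‖ := by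
      have hC' : ∀ᶠ y in nhdsWithin (0:ℂ) {0}ᶜ,
          ‖Gg y - p.partialSum 3 y‖ ≤ C * ‖y‖ ^ 3 := by
        apply eventually_nhdsWithin_of_eventually_nhds
        filter_upwards [hC] with y hy
        simpa using hy
      filter_upwards [hC', self_mem_nhdsWithin] with y hy hy0
      have hyne : y ≠ 0 := hy0
      have h1 : Gg y / y ^ 2 - Tc / 2 = (Gg y - p.partialSum 3 y) / y ^ 2 := by
        rw [hPS, sub_div, mul_div_cancel_left₀ _ (pow_ne_zero 2 hyne)]
      rw [h1, norm_div, norm_pow]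
      rw [div_le_iff₀ (pow_pos (norm_pos_iff.mpr hyne) 2)]
      calc ‖Gg y - p.partialSum 3 y‖ ≤ C * ‖y‖ ^ 3 := hy
      _ = C * ‖y‖ * ‖y‖ ^ 2 := by ring
    have hzero : Tendsto (fun y : ℂ => C * ‖y‖) (nhdsWithin 0 {0}ᶜ) (nhds 0) := by
      have : Tendsto (fun y : ℂ => C * ‖y‖) (nhds 0) (nhds (C * ‖(0:ℂ)‖)) :=
        (continuous_const.mul continuous_norm).continuousAt
      simp only [norm_zero, mul_zero] at this
      exact this.mono_left nhdsWithin_le_nhds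
    have hsub : Tendsto (fun y : ℂ => Gg y / y ^ 2 - Tc / 2) (nhdsWithin 0 {0}ᶜ) (nhds 0) :=
      squeeze_zero_norm' hbound hzero
    have := hsub.add (tendsto_const_nhds (x := Tc / 2))
    simpa using this
  -- identification of r with F
  have hPβc : ∀ β : ℝ, Pβ β = Mc (β : ℂ) := by
    intro β
    ext x y
    rw [hPβ, hMcdef]
  have hreq : ∀ lam : ℝ, r lam = F ((s / Real.sqrt lam : ℝ) : ℂ) / F₀ := by
    intro lam
    rw [hr lam, hPβc, hF₀def]
  have hlogr : ∀ lam : ℝ, Complex.log (r lam) = Gg ((s / Real.sqrt lam : ℝ) : ℂ) := by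
    intro lam
    rw [hreq lam, hGgdef]
  -- tendsto of the parameter
  have hsqrtTop : Tendsto Real.sqrt atTop atTop := by
    apply Filter.tendsto_atTop_atTop.mpr
    intro b
    refine ⟨(max 0 b) ^ 2, fun a ha => ?_⟩
    have h1 : max 0 b ≤ Real.sqrt a := by
      rw [← Real.sqrt_sq (le_max_left 0 b)]
      exact Real.sqrt_le_sqrt ha
    exact le_trans (le_max_right 0 b) h1
  have hparam : Tendsto (fun lam : ℝ => ((s / Real.sqrt lam : ℝ) : ℂ)) atTop (nhds 0) := by
    have h1 : Tendsto (fun lam : ℝ => s / Real.sqrt lam) atTop (nhds 0) :=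
      Filter.Tendsto.div_atTop tendsto_const_nhds hsqrtTop
    have h2 := (Complex.continuous_ofReal.tendsto 0).comp h1
    simpa [Function.comp_def] using h2
  -- Part 1
  have part1 : Tendsto r atTop (nhds 1) := by
    have h1 : Tendsto (fun lam : ℝ => F ((s / Real.sqrt lam : ℝ) : ℂ)) atTop (nhds F₀) := by
      have := hFcont.tendsto.comp hparam
      rwa [hF0] at this
    have h2 : Tendsto (fun lam : ℝ => F ((s / Real.sqrt lam : ℝ) : ℂ) / F₀) atTop
        (nhds (F₀ / F₀)) := h1.div_const F₀
    rw [div_self hF₀ne] at h2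
    exact h2.congr fun lam => (hreq lam).symm
  refine ⟨part1, ?_⟩
  -- Part 2
  by_cases hs : s = 0
  · subst hs
    have heq : ∀ lam : ℝ, Complex.exp (-(lam : ℂ) * Complex.log (r lam)) = 1 := by
      intro lam
      rw [hlogr lam]
      simp [hGg0, Real.sqrt_eq_zero', zero_div]
    have hrhs : Complex.exp ((-((0:ℝ) ^ 2 / 2) *
        (Matrix.trace ((P ⊙ (A ⊙ A)) * Gr) +
          Matrix.trace ((P ⊙ A) * Gr * (P ⊙ A) * Gr)) : ℝ) : ℂ) = 1 := by
      norm_num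
    rw [hrhs]
    simp only [heq]
    exact tendsto_const_nhds
  · -- s ≠ 0
    have hparam' : Tendsto (fun lam : ℝ => ((s / Real.sqrt lam : ℝ) : ℂ)) atTop
        (nhdsWithin 0 {0}ᶜ) := by
      rw [tendsto_nhdsWithin_iff]
      refine ⟨hparam, ?_⟩
      filter_upwards [Filter.eventually_gt_atTop (0:ℝ)] with lam hlam
      have hsq : 0 < Real.sqrt lam := Real.sqrt_pos.mpr hlam
      simp only [Set.mem_compl_iff, Set.mem_singleton_iff, Complex.ofReal_eq_zero]
      exact div_ne_zero hs hsq.ne'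
    have hcomp : Tendsto (fun lam : ℝ => Gg ((s / Real.sqrt lam : ℝ) : ℂ) /
        ((s / Real.sqrt lam : ℝ) : ℂ) ^ 2) atTop (nhds (Tc / 2)) := hlim.comp hparam'
    have hfinal : Tendsto (fun lam : ℝ => -(s:ℂ) ^ 2 * (Gg ((s / Real.sqrt lam : ℝ) : ℂ) /
        ((s / Real.sqrt lam : ℝ) : ℂ) ^ 2)) atTop (nhds (-(s:ℂ) ^ 2 * (Tc / 2))) :=
      hcomp.const_mul _
    have hev2 : ∀ᶠ lam : ℝ in atTop, -(lam : ℂ) * Complex.log (r lam)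
        = -(s:ℂ) ^ 2 * (Gg ((s / Real.sqrt lam : ℝ) : ℂ) /
          ((s / Real.sqrt lam : ℝ) : ℂ) ^ 2) := by
      filter_upwards [Filter.eventually_gt_atTop (0:ℝ)] with lam hlam
      rw [hlogr lam]
      have hsq : 0 < Real.sqrt lam := Real.sqrt_pos.mpr hlam
      have ht2 : (((s / Real.sqrt lam : ℝ) : ℂ)) ^ 2 = (s:ℂ) ^ 2 / (lam : ℂ) := by
        push_cast
        rw [div_pow]
        congr 1
        norm_cast
        exact Real.sq_sqrt hlam.le
      rw [ht2]
      have hlamne : (lam : ℂ) ≠ 0 := by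
        simp only [ne_eq, Complex.ofReal_eq_zero]
        exact hlam.ne'
      have hsne : (s:ℂ) ≠ 0 := by
        simp only [ne_eq, Complex.ofReal_eq_zero]
        exact hs
      field_simp
    have hexp : Tendsto (fun lam : ℝ => Complex.exp (-(lam : ℂ) * Complex.log (r lam))) atTop
        (nhds (Complex.exp (-(s:ℂ) ^ 2 * (Tc / 2)))) := by
      have hev2' : (fun lam : ℝ => -(s:ℂ) ^ 2 * (Gg ((s / Real.sqrt lam : ℝ) : ℂ) /
          ((s / Real.sqrt lam : ℝ) : ℂ) ^ 2)) =ᶠ[atTop]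
          (fun lam : ℝ => -(lam : ℂ) * Complex.log (r lam)) :=
        hev2.mono fun lam h => h.symm
      have h1 : Tendsto (fun lam : ℝ => -(lam : ℂ) * Complex.log (r lam)) atTop
          (nhds (-(s:ℂ) ^ 2 * (Tc / 2))) := Tendsto.congr' hev2' hfinal
      exact (Complex.continuous_exp.tendsto _).comp h1
    convert hexp using 2
    -- constant identification
    have hT1 : (Grc * Cc).trace = ((Matrix.trace ((P ⊙ (A ⊙ A)) * Gr) : ℝ) : ℂ) := by
      rw [Matrix.trace_mul_comm, hGrcdef, hCcdef, ← Matrix.map_mul, htrmap]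
    have hT2 : (Grc * Bc * Grc * Bc).trace
        = ((Matrix.trace ((P ⊙ A) * Gr * (P ⊙ A) * Gr) : ℝ) : ℂ) := by
      have h1 : Grc * Bc * Grc * Bc = Grc * (Bc * Grc * Bc) := by
        simp [Matrix.mul_assoc]
      rw [h1, Matrix.trace_mul_comm]
      have h2 : Bc * Grc * Bc * Grc = ((P ⊙ A) * Gr * (P ⊙ A) * Gr).map Complex.ofRealHom := by
        rw [hBcdef, hGrcdef]
        simp [Matrix.map_mul, Matrix.mul_assoc]
      rw [h2, htrmap]
    rw [hTcdef, hT1, hT2]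
    push_cast
    ring
end

section
/- Fix λ > 0 and d > 0. Define g: ℝ → ℝ by g(β) = β′(2π − β′)/(4π²), where β′ ∈ [0, 2π) is the representative of β modulo 2π. Let ψ: ℝ → ℂ be any function continuous at 0 with ψ(0) = 1. Then for every s ∈ ℝ, lim_{δ → 0⁺} ψ(s/log δ) · (d/δ)^{−λ g(s/log δ)} = exp(−(λ/(2π)) |s|). (The right-hand side is the characteristic function of a Cauchy random variable with location parameter 0 and scale parameter λ/(2π); this is the analytic core of the Spitzer-type law stating that W^δ_λ(z)/log δ, the total winding around a point z of all Brownian loop soup loops of diameter at least δ divided by log δ, converges in distribution to such a Cauchy variable as δ → 0, given that the characteristic function of the winding of loops of diameter between δ and d is (d/δ)^{−λ g(β)} and ψ is the characteristic function of the winding of the loops of diameter at least d.) -/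
open Filter Real

/-- The exponent `g(β) = β'(2π - β')/(4π²)` where `β' ∈ [0, 2π)` is the representative
of `β` modulo `2π`. -/
noncomputable def windingExponent (β : ℝ) : ℝ :=
  (2 * Real.pi * Int.fract (β / (2 * Real.pi))) *
      (2 * Real.pi - 2 * Real.pi * Int.fract (β / (2 * Real.pi))) / (4 * Real.pi ^ 2)

lemma aux_inv_tendsto : Tendsto (fun L : ℝ => L⁻¹) atBot (nhds 0) := by
  have h1 : Tendsto (fun L : ℝ => -L) atBot atTop := tendsto_neg_atBot_atTop
  have h2 : Tendsto (fun L : ℝ => (-L)⁻¹) atBot (nhds (0 : ℝ)) :=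
    tendsto_inv_atTop_zero.comp h1
  have h3 := h2.neg
  simp only [inv_neg, neg_neg, neg_zero] at h3
  exact h3

lemma aux_tendsto (lam d s : ℝ) :
    Tendsto (fun L : ℝ => -(lam * windingExponent (s / L)) * (Real.log d - L)) atBot
      (nhds (-(lam / (2 * Real.pi)) * |s|)) := by
  have hπ : (Real.pi : ℝ) ≠ 0 := Real.pi_ne_zero
  have hπpos := Real.pi_pos
  have h1 : Tendsto (fun L : ℝ => s / L) atBot (nhds 0) := by
    have := aux_inv_tendsto.const_mul s
    simp only [mul_zero] at this
    exact this.congr (fun L => (div_eq_mul_inv s L).symm)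
  have h2 : Tendsto (fun L : ℝ => (Real.log d - L) * (s / L)) atBot (nhds (-s)) := by
    have h : Tendsto (fun L : ℝ => s * Real.log d * L⁻¹ - s) atBot (nhds (-s)) := by
      have := (aux_inv_tendsto.const_mul (s * Real.log d)).sub_const s
      simpa using this
    refine h.congr' ?_
    filter_upwards [eventually_lt_atBot (0 : ℝ)] with L hL
    have hL0 : L ≠ 0 := ne_of_lt hL
    field_simp
  rcases lt_trichotomy s 0 with hs | hs | hs
  · -- s < 0 : fract (s/(2πL)) = s/(2πL) eventually
    have key : Tendsto (fun L : ℝ => -lam * (2 * Real.pi - s / L) *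
        ((Real.log d - L) * (s / L)) / (4 * Real.pi ^ 2)) atBot
        (nhds (-(lam / (2 * Real.pi)) * |s|)) := by
      have hc : Tendsto (fun _ : ℝ => 2 * Real.pi) atBot (nhds (2 * Real.pi)) :=
        tendsto_const_nhds
      have := (((hc.sub h1).const_mul (-lam)).mul h2).div_const (4 * Real.pi ^ 2)
      convert this using 2
      rw [abs_of_neg hs]
      field_simp
      ring
    refine Tendsto.congr' ?_ key
    filter_upwards [eventually_lt_atBot (s / (2 * Real.pi)), eventually_lt_atBot (0 : ℝ)]
      with L hL1 hL0
    have hL0' : L ≠ 0 := ne_of_lt hL0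
    have h2πL : 2 * Real.pi * L < s := by
      have := (lt_div_iff₀ (by positivity : (0:ℝ) < 2 * Real.pi)).mp hL1
      linarith
    have hfr : Int.fract (s / L / (2 * Real.pi)) = s / L / (2 * Real.pi) := by
      rw [Int.fract_eq_self]
      constructor
      · have : 0 < s / L := div_pos_of_neg_of_neg hs hL0
        positivity
      · rw [div_lt_one (by positivity : (0:ℝ) < 2 * Real.pi),
          div_lt_iff_of_neg hL0]
        linarith
    simp only [windingExponent, hfr]
    field_simp
  · -- s = 0
    simp only [hs, zero_div, windingExponent, Int.fract_zero, mul_zero, zero_mul,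
      zero_div, neg_zero, zero_mul, abs_zero, mul_zero]
    exact tendsto_const_nhds
  · -- s > 0 : fract (s/(2πL)) = s/(2πL) + 1 eventually
    have key : Tendsto (fun L : ℝ => lam * (2 * Real.pi + s / L) *
        ((Real.log d - L) * (s / L)) / (4 * Real.pi ^ 2)) atBot
        (nhds (-(lam / (2 * Real.pi)) * |s|)) := by
      have hc : Tendsto (fun _ : ℝ => 2 * Real.pi) atBot (nhds (2 * Real.pi)) :=
        tendsto_const_nhds
      have := (((hc.add h1).const_mul lam).mul h2).div_const (4 * Real.pi ^ 2)
      convert this using 2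
      rw [abs_of_pos hs]
      field_simp
      ring
    refine Tendsto.congr' ?_ key
    filter_upwards [eventually_le_atBot (-(s / (2 * Real.pi))), eventually_lt_atBot (0 : ℝ)]
      with L hL1 hL0
    have hL0' : L ≠ 0 := ne_of_lt hL0
    have h2πL : s ≤ -(2 * Real.pi * L) := by
      have : s / (2 * Real.pi) ≤ -L := by linarith
      have := (div_le_iff₀ (by positivity : (0:ℝ) < 2 * Real.pi)).mp this
      linarith
    have hfr : Int.fract (s / L / (2 * Real.pi)) = s / L / (2 * Real.pi) + 1 := by
      have hLneg : L * (2 * Real.pi) < 0 := mul_neg_of_neg_of_pos hL0 (by positivity)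
      have hfloor : ⌊s / L / (2 * Real.pi)⌋ = -1 := by
        rw [Int.floor_eq_iff]
        push_cast
        constructor
        · rw [div_div, le_div_iff_of_neg hLneg]
          linarith
        · have hneg : s / L < 0 := div_neg_of_pos_of_neg hs hL0
          have : s / L / (2 * Real.pi) < 0 :=
            div_neg_of_neg_of_pos hneg (by positivity)
          linarith
      rw [Int.fract, hfloor]
      push_cast
      ring
    simp only [windingExponent, hfr]
    field_simp
    ring

/-- Spitzer-type law for windings of the Brownian loop soup, analytic core:
for `λ, d > 0` and any `ψ : ℝ → ℂ` continuous at `0` with `ψ(0) = 1`,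
`ψ(s/log δ) (d/δ)^{-λ g(s/log δ)} → exp(-(λ/(2π))|s|)` as `δ → 0⁺`. -/
theorem spitzer_type_law_loop_soup
    (lam d : ℝ) (hlam : 0 < lam) (hd : 0 < d)
    (ψ : ℝ → ℂ) (hψ_cont : ContinuousAt ψ 0) (hψ0 : ψ 0 = 1) (s : ℝ) :
    Tendsto
      (fun δ : ℝ =>
        ψ (s / Real.log δ) *
          (((d / δ) ^ (-(lam * windingExponent (s / Real.log δ))) : ℝ) : ℂ))
      (nhdsWithin 0 (Set.Ioi 0))
      (nhds ((Real.exp (-(lam / (2 * Real.pi)) * |s|) : ℝ) : ℂ)) := by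
  have hlog : Tendsto Real.log (nhdsWithin 0 (Set.Ioi 0)) atBot :=
    Real.tendsto_log_nhdsGT_zero
  -- β = s / log δ → 0
  have hβ : Tendsto (fun δ : ℝ => s / Real.log δ) (nhdsWithin 0 (Set.Ioi 0)) (nhds 0) := by
    have h1 : Tendsto (fun L : ℝ => s / L) atBot (nhds 0) := by
      have := aux_inv_tendsto.const_mul s
      simp only [mul_zero] at this
      exact this.congr (fun L => (div_eq_mul_inv s L).symm)
    exact h1.comp hlog
  have hψ : Tendsto (fun δ : ℝ => ψ (s / Real.log δ)) (nhdsWithin 0 (Set.Ioi 0))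
      (nhds 1) := by
    have := hψ_cont.tendsto.comp hβ
    rwa [hψ0] at this
  -- the exponential factor
  have hE : Tendsto (fun δ : ℝ => -(lam * windingExponent (s / Real.log δ)) *
      (Real.log d - Real.log δ)) (nhdsWithin 0 (Set.Ioi 0))
      (nhds (-(lam / (2 * Real.pi)) * |s|)) :=
    (aux_tendsto lam d s).comp hlog
  have hexp : Tendsto (fun δ : ℝ => ((Real.exp (-(lam * windingExponent (s / Real.log δ)) *
      (Real.log d - Real.log δ)) : ℝ) : ℂ)) (nhdsWithin 0 (Set.Ioi 0))
      (nhds ((Real.exp (-(lam / (2 * Real.pi)) * |s|) : ℝ) : ℂ)) :=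
    (Complex.continuous_ofReal.tendsto _).comp ((Real.continuous_exp.tendsto _).comp hE)
  have hmul := hψ.mul hexp
  rw [one_mul] at hmul
  refine Tendsto.congr' ?_ hmul
  filter_upwards [self_mem_nhdsWithin] with δ (hδ : 0 < δ)
  have hdδ : (0 : ℝ) < d / δ := div_pos hd hδ
  rw [Real.rpow_def_of_pos hdδ, Real.log_div (ne_of_gt hd) (ne_of_gt hδ), mul_comm (Real.log d - Real.log δ)]
end

section
/- Let 𝒢 be a finite connected simple graph with killing function κ not identically zero whose transition matrix P is symmetric, let d ≥ 1, and let (A_{xy}) be a Hermitian connection on 𝒢. Set E^β = P ⊗ I_d − B^β. Then lim_{β→0} β^{−2} Tr( (G ⊗ I_d) E^β ) = (1/2) Σ_{(x,y): x∼y} G_{xy} P_{xy} Tr(A_{xy}²), the sum being over ordered pairs of adjacent vertices. -/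
open Matrix Kronecker Filter

section AuxTraceGreen

lemma auxTG_sin_div_lim :
    Tendsto (fun t : ℝ => Real.sin t / t) (nhdsWithin 0 {0}ᶜ) (nhds 1) := by
  have h := (Real.hasDerivAt_sin 0)
  rw [hasDerivAt_iff_tendsto_slope] at h
  simp only [Real.cos_zero] at h
  refine h.congr (fun t => ?_)
  simp [slope_def_field, div_eq_mul_inv, mul_comm]

lemma auxTG_scalar_lim (l : ℝ) :
    Tendsto (fun β : ℝ => ((β : ℂ) ^ 2)⁻¹ *
        (2 - Complex.exp (Complex.I * β * l) - Complex.exp (-(Complex.I * β * l))))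
      (nhdsWithin 0 {0}ᶜ) (nhds ((l : ℂ) ^ 2)) := by
  have hreal : Tendsto (fun β : ℝ => (2 - 2 * Real.cos (β * l)) / β ^ 2) (nhdsWithin 0 {0}ᶜ)
      (nhds (l ^ 2)) := by
    rcases eq_or_ne l 0 with rfl | hl
    · simpa using tendsto_const_nhds.congr (fun β : ℝ => by simp)
    · have hmap : Tendsto (fun β : ℝ => β * l / 2) (nhdsWithin 0 {0}ᶜ) (nhdsWithin 0 {0}ᶜ) := by
        apply Tendsto.inf
        · have h : Tendsto (fun β : ℝ => β * l / 2) (nhds 0) (nhds (0 * l / 2)) :=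
            ((tendsto_id.mul_const l).div_const 2)
          simpa using h
        · rw [tendsto_principal, eventually_principal]
          intro β hβ
          simp only [Set.mem_compl_iff, Set.mem_singleton_iff] at hβ ⊢
          simp [div_eq_zero_iff, hβ, hl]
      have hcomp : Tendsto (fun β : ℝ => l ^ 2 * (Real.sin (β * l / 2) / (β * l / 2)) ^ 2)
          (nhdsWithin 0 {0}ᶜ) (nhds (l ^ 2)) := by
        have h := ((auxTG_sin_div_lim.comp hmap).pow 2).const_mul (l ^ 2)
        simpa using h
      refine hcomp.congr' ?_
      filter_upwards [self_mem_nhdsWithin] with β hβ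
      have hβ0 : β ≠ 0 := by simpa using hβ
      have hsin : Real.sin (β * l / 2) ^ 2 = (1 - Real.cos (β * l)) / 2 := by
        have h1 := Real.cos_sq (β * l / 2)
        have h2 := Real.sin_sq_add_cos_sq (β * l / 2)
        have h3 : (2 : ℝ) * (β * l / 2) = β * l := by ring
        rw [h3] at h1
        linarith
      field_simp
      rw [mul_comm β l] at hsin
      nlinarith [hsin]
  have hT := (Complex.continuous_ofReal.tendsto _).comp hreal
  rw [Complex.ofReal_pow] at hT
  refine hT.congr fun β => ?_
  have e1 : Complex.I * β * l = ((β * l : ℝ) : ℂ) * Complex.I := by push_cast; ring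
  rw [Function.comp_apply, e1, Complex.exp_mul_I, ← neg_mul, Complex.exp_mul_I,
    Complex.cos_neg, Complex.sin_neg, ← Complex.ofReal_cos, ← Complex.ofReal_sin]
  push_cast
  have hc : ∀ c s : ℂ, 2 - (c + s * Complex.I) - (c + -s * Complex.I) = 2 - 2 * c := by
    intro c s; ring
  rw [hc]
  ring

lemma auxTG_trace_exp_eig {d : ℕ} (M : Matrix (Fin d) (Fin d) ℂ) (hM : M.IsHermitian) (z : ℂ) :
    Matrix.trace (NormedSpace.exp (z • M)) =
      ∑ k, Complex.exp (z * (hM.eigenvalues k : ℝ)) := by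
  have hUU' : (hM.eigenvectorUnitary : Matrix (Fin d) (Fin d) ℂ) *
      star (hM.eigenvectorUnitary : Matrix (Fin d) (Fin d) ℂ) = 1 :=
    Matrix.mem_unitaryGroup_iff.mp hM.eigenvectorUnitary.2
  have hUU : star (hM.eigenvectorUnitary : Matrix (Fin d) (Fin d) ℂ) *
      (hM.eigenvectorUnitary : Matrix (Fin d) (Fin d) ℂ) = 1 :=
    Matrix.mem_unitaryGroup_iff'.mp hM.eigenvectorUnitary.2
  set U : Matrix (Fin d) (Fin d) ℂ := (hM.eigenvectorUnitary : Matrix (Fin d) (Fin d) ℂ) with hU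
  have hUnit : IsUnit U := ⟨⟨U, star U, hUU', hUU⟩, rfl⟩
  have hUinv : U⁻¹ = star U := Matrix.inv_eq_right_inv hUU'
  have hsmul : z • M = U * (Matrix.diagonal (fun k => z * (hM.eigenvalues k : ℝ))) * U⁻¹ := by
    have hspec : M = (hM.eigenvectorUnitary : Matrix (Fin d) (Fin d) ℂ) *
        Matrix.diagonal (RCLike.ofReal ∘ hM.eigenvalues) *
        star (hM.eigenvectorUnitary : Matrix (Fin d) (Fin d) ℂ) := hM.spectral_theorem
    conv_lhs => rw [hspec]
    rw [← hU, hUinv, Matrix.mul_assoc, ← Matrix.mul_smul, ← Matrix.smul_mul, Matrix.mul_assoc]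
    congr 2
    ext i j
    simp [Matrix.diagonal, Function.comp, mul_comm]
  rw [hsmul, Matrix.exp_conj _ _ hUnit, Matrix.trace_mul_cycle, hUinv, hUU, Matrix.one_mul,
    Matrix.exp_diagonal, Matrix.trace_diagonal]
  refine Finset.sum_congr rfl fun k _ => ?_
  rw [Pi.coe_exp, Complex.exp_eq_exp_ℂ]

lemma auxTG_trace_sq_eig {d : ℕ} (M : Matrix (Fin d) (Fin d) ℂ) (hM : M.IsHermitian) :
    Matrix.trace (M * M) = ∑ k, ((hM.eigenvalues k : ℝ) : ℂ) ^ 2 := by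
  have hUU' : (hM.eigenvectorUnitary : Matrix (Fin d) (Fin d) ℂ) *
      star (hM.eigenvectorUnitary : Matrix (Fin d) (Fin d) ℂ) = 1 :=
    Matrix.mem_unitaryGroup_iff.mp hM.eigenvectorUnitary.2
  have hUU : star (hM.eigenvectorUnitary : Matrix (Fin d) (Fin d) ℂ) *
      (hM.eigenvectorUnitary : Matrix (Fin d) (Fin d) ℂ) = 1 :=
    Matrix.mem_unitaryGroup_iff'.mp hM.eigenvectorUnitary.2
  set U : Matrix (Fin d) (Fin d) ℂ := (hM.eigenvectorUnitary : Matrix (Fin d) (Fin d) ℂ) with hU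
  set D : Matrix (Fin d) (Fin d) ℂ := Matrix.diagonal (RCLike.ofReal ∘ hM.eigenvalues) with hD
  have hspec : M = U * D * star U := hM.spectral_theorem
  have hMM : M * M = U * (D * D) * star U := by
    rw [hspec]
    calc (U * D * star U) * (U * D * star U) = U * (D * ((star U * U) * D)) * star U := by
          simp only [Matrix.mul_assoc]
        _ = U * (D * D) * star U := by rw [hUU, Matrix.one_mul]
  rw [hMM, Matrix.trace_mul_cycle, ← Matrix.mul_assoc, hUU, Matrix.one_mul, hD,
    Matrix.diagonal_mul_diagonal, Matrix.trace_diagonal]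
  refine Finset.sum_congr rfl fun k _ => ?_
  simp [Function.comp, sq]

lemma auxTG_matrix_lim {d : ℕ} (M : Matrix (Fin d) (Fin d) ℂ) (hM : M.IsHermitian) :
    Tendsto (fun β : ℝ => ((β : ℂ) ^ 2)⁻¹ *
        (2 * d - Matrix.trace (NormedSpace.exp ((Complex.I * β) • M))
          - Matrix.trace (NormedSpace.exp ((Complex.I * β) • (-M)))))
      (nhdsWithin 0 {0}ᶜ) (nhds (Matrix.trace (M * M))) := by
  have key : ∀ β : ℝ, ((β : ℂ) ^ 2)⁻¹ *
      (2 * d - Matrix.trace (NormedSpace.exp ((Complex.I * β) • M))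
        - Matrix.trace (NormedSpace.exp ((Complex.I * β) • (-M))))
      = ∑ k, ((β : ℂ) ^ 2)⁻¹ *
          (2 - Complex.exp (Complex.I * β * (hM.eigenvalues k : ℝ))
            - Complex.exp (-(Complex.I * β * (hM.eigenvalues k : ℝ)))) := by
    intro β
    have h1 := auxTG_trace_exp_eig M hM (Complex.I * β)
    have h2 : Matrix.trace (NormedSpace.exp ((Complex.I * β) • (-M)))
        = ∑ k, Complex.exp (-(Complex.I * β * (hM.eigenvalues k : ℝ))) := by
      have e : (Complex.I * (β : ℂ)) • (-M) = (-(Complex.I * β)) • M := by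
        rw [smul_neg, neg_smul]
      rw [e, auxTG_trace_exp_eig M hM (-(Complex.I * β))]
      simp [neg_mul]
    rw [h1, h2]
    have e2 : (2 * (d : ℂ) - (∑ k, Complex.exp (Complex.I * β * (hM.eigenvalues k : ℝ)))
        - ∑ k, Complex.exp (-(Complex.I * β * (hM.eigenvalues k : ℝ))))
        = ∑ k, (2 - Complex.exp (Complex.I * β * (hM.eigenvalues k : ℝ))
            - Complex.exp (-(Complex.I * β * (hM.eigenvalues k : ℝ)))) := by
      rw [Finset.sum_sub_distrib, Finset.sum_sub_distrib, Finset.sum_const, Finset.card_univ,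
        Fintype.card_fin, nsmul_eq_mul]
      ring
    rw [e2, Finset.mul_sum]
  rw [auxTG_trace_sq_eig M hM]
  exact Tendsto.congr (fun β => (key β).symm)
    (tendsto_finset_sum _ fun k _ => auxTG_scalar_lim (hM.eigenvalues k))

end AuxTraceGreen

/-- With `E^β = P ⊗ I_d - B^β`,
`lim_{β→0} β⁻² Tr((G ⊗ I_d) E^β) = (1/2) ∑_{x∼y} G_{xy} P_{xy} Tr(A_{xy}²)`. -/
theorem tendsto_trace_green_perturbation_holonomy
    {V : Type*} [Fintype V] [DecidableEq V]
    (G : SimpleGraph V) [DecidableRel G.Adj] (hconn : G.Connected)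
    (κ : V → ℝ) (hκnn : ∀ x, 0 ≤ κ x) (hκ : κ ≠ 0)
    (P : Matrix V V ℝ)
    (hP : ∀ x y, P x y = if G.Adj x y then 1 / (κ x + (G.degree x : ℝ)) else 0)
    (hPsymm : ∀ x y, P x y = P y x)
    (Gr : Matrix V V ℝ) (hGr : Gr = (1 - P)⁻¹)
    (d : ℕ) (hd : 1 ≤ d)
    (A : V → V → Matrix (Fin d) (Fin d) ℂ)
    (hAherm : ∀ x y, G.Adj x y → (A x y).IsHermitian)
    (hAskew : ∀ x y, G.Adj x y → A y x = - A x y)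
    (B : ℝ → Matrix (V × Fin d) (V × Fin d) ℂ)
    (hB : ∀ β x y i j, B β (x, i) (y, j) =
      if G.Adj x y then (P x y : ℂ) * (NormedSpace.exp ((Complex.I * β) • A x y)) i j
      else 0)
    (Eβ : ℝ → Matrix (V × Fin d) (V × Fin d) ℂ)
    (hEβ : ∀ β, Eβ β = (P.map Complex.ofReal) ⊗ₖ (1 : Matrix (Fin d) (Fin d) ℂ) - B β) :
    Tendsto
      (fun β : ℝ => ((β : ℂ) ^ 2)⁻¹ *
        Matrix.trace
          (((Gr.map Complex.ofReal) ⊗ₖ (1 : Matrix (Fin d) (Fin d) ℂ)) * Eβ β))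
      (nhdsWithin 0 {0}ᶜ)
      (nhds ((1 / 2 : ℂ) *
        ∑ x : V, ∑ y : V,
          if G.Adj x y then ((Gr x y * P x y : ℝ) : ℂ) * Matrix.trace (A x y ^ 2) else 0)) := by
  -- symmetry of the Green's function
  have hGrsym : ∀ x y, Gr x y = Gr y x := by
    intro x y
    have hPT : Pᵀ = P := by
      ext a b
      rw [Matrix.transpose_apply]
      exact (hPsymm a b).symm
    have hT : Grᵀ = Gr := by
      rw [hGr, Matrix.transpose_nonsing_inv, Matrix.transpose_sub, Matrix.transpose_one, hPT]
    calc Gr x y = Grᵀ y x := rfl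
      _ = Gr y x := by rw [hT]
  -- value of a block-column sum of `Eβ`
  have inner : ∀ (β : ℝ) (x y : V), (∑ i : Fin d, Eβ β (y, i) (x, i))
      = if G.Adj x y then (P x y : ℂ) *
          ((d : ℂ) - Matrix.trace (NormedSpace.exp ((Complex.I * β) • A y x))) else 0 := by
    intro β x y
    by_cases hadj : G.Adj x y
    · have hadj' : G.Adj y x := G.adj_symm hadj
      have hPyx : P y x = P x y := hPsymm y x
      simp only [hEβ, Matrix.sub_apply, Matrix.kroneckerMap_apply, Matrix.map_apply,
        hB, hadj', if_true, Matrix.one_apply_eq, if_pos hadj, mul_one]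
      rw [Finset.sum_sub_distrib, Finset.sum_const, Finset.card_univ, Fintype.card_fin,
        ← Finset.mul_sum]
      have htr : Matrix.trace (NormedSpace.exp ((Complex.I * β) • A y x))
          = ∑ i : Fin d, (NormedSpace.exp ((Complex.I * β) • A y x)) i i := rfl
      rw [← htr, hPyx, nsmul_eq_mul]
      ring
    · have hadj' : ¬ G.Adj y x := fun h => hadj (G.adj_symm h)
      have h0 : P y x = 0 := by rw [hP]; simp [hadj']
      simp [hEβ, hB, hadj', hadj, h0]
  -- trace of the product in block form
  have tr1 : ∀ β : ℝ, Matrix.trace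
      (((Gr.map Complex.ofReal) ⊗ₖ (1 : Matrix (Fin d) (Fin d) ℂ)) * Eβ β)
      = ∑ x : V, ∑ y : V, (Gr x y : ℂ) * ∑ i : Fin d, Eβ β (y, i) (x, i) := by
    intro β
    rw [Matrix.trace]
    simp only [Matrix.diag_apply, Matrix.mul_apply, Fintype.sum_prod_type,
      Matrix.kroneckerMap_apply, Matrix.map_apply, Matrix.one_apply, mul_ite, mul_one, mul_zero,
      ite_mul, zero_mul, Finset.sum_ite_eq, Finset.sum_ite_eq', Finset.mem_univ, if_true]
    refine Finset.sum_congr rfl fun x _ => ?_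
    rw [Finset.sum_comm]
    exact Finset.sum_congr rfl fun y _ => (Finset.mul_sum _ _ _).symm
  -- the function rewritten as a finite sum
  have main_eq : ∀ β : ℝ, ((β : ℂ) ^ 2)⁻¹ * Matrix.trace
      (((Gr.map Complex.ofReal) ⊗ₖ (1 : Matrix (Fin d) (Fin d) ℂ)) * Eβ β)
      = ∑ x : V, ∑ y : V, (if G.Adj x y then ((Gr x y * P x y : ℝ) : ℂ) *
          (((β : ℂ) ^ 2)⁻¹ * ((d : ℂ)
            - Matrix.trace (NormedSpace.exp ((Complex.I * β) • A y x)))) else 0) := by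
    intro β
    rw [tr1 β, Finset.mul_sum]
    refine Finset.sum_congr rfl fun x _ => ?_
    rw [Finset.mul_sum]
    refine Finset.sum_congr rfl fun y _ => ?_
    rw [inner β x y]
    by_cases hadj : G.Adj x y
    · simp only [if_pos hadj]
      push_cast
      ring
    · simp [hadj]
  -- symmetrization
  have sym_eq : ∀ β : ℝ,
      (∑ x : V, ∑ y : V, (if G.Adj x y then ((Gr x y * P x y : ℝ) : ℂ) *
          (((β : ℂ) ^ 2)⁻¹ * ((d : ℂ)
            - Matrix.trace (NormedSpace.exp ((Complex.I * β) • A y x)))) else 0))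
      = (1 / 2 : ℂ) * ∑ x : V, ∑ y : V, (if G.Adj x y then ((Gr x y * P x y : ℝ) : ℂ) *
          (((β : ℂ) ^ 2)⁻¹ * (2 * (d : ℂ)
            - Matrix.trace (NormedSpace.exp ((Complex.I * β) • A y x))
            - Matrix.trace (NormedSpace.exp ((Complex.I * β) • (-(A y x)))))) else 0) := by
    intro β
    have hswap : (∑ x : V, ∑ y : V, (if G.Adj x y then ((Gr x y * P x y : ℝ) : ℂ) *
          (((β : ℂ) ^ 2)⁻¹ * ((d : ℂ)
            - Matrix.trace (NormedSpace.exp ((Complex.I * β) • A y x)))) else 0))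
        = ∑ x : V, ∑ y : V, (if G.Adj y x then ((Gr y x * P y x : ℝ) : ℂ) *
          (((β : ℂ) ^ 2)⁻¹ * ((d : ℂ)
            - Matrix.trace (NormedSpace.exp ((Complex.I * β) • A x y)))) else 0) :=
      Finset.sum_comm
    have h2 : (∑ x : V, ∑ y : V, (if G.Adj x y then ((Gr x y * P x y : ℝ) : ℂ) *
          (((β : ℂ) ^ 2)⁻¹ * ((d : ℂ)
            - Matrix.trace (NormedSpace.exp ((Complex.I * β) • A y x)))) else 0))
        + (∑ x : V, ∑ y : V, (if G.Adj y x then ((Gr y x * P y x : ℝ) : ℂ) *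
          (((β : ℂ) ^ 2)⁻¹ * ((d : ℂ)
            - Matrix.trace (NormedSpace.exp ((Complex.I * β) • A x y)))) else 0))
        = ∑ x : V, ∑ y : V, (if G.Adj x y then ((Gr x y * P x y : ℝ) : ℂ) *
          (((β : ℂ) ^ 2)⁻¹ * (2 * (d : ℂ)
            - Matrix.trace (NormedSpace.exp ((Complex.I * β) • A y x))
            - Matrix.trace (NormedSpace.exp ((Complex.I * β) • (-(A y x)))))) else 0) := by
      rw [← Finset.sum_add_distrib]
      refine Finset.sum_congr rfl fun x _ => ?_
      rw [← Finset.sum_add_distrib]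
      refine Finset.sum_congr rfl fun y _ => ?_
      by_cases hadj : G.Adj x y
      · have hadj' : G.Adj y x := G.adj_symm hadj
        have hcc : Gr y x * P y x = Gr x y * P x y := by
          rw [hGrsym y x, hPsymm y x]
        have hA : A x y = -(A y x) := by
          rw [hAskew x y hadj, neg_neg]
        simp only [if_pos hadj, if_pos hadj', hcc, hA]
        ring
      · have hadj' : ¬ G.Adj y x := fun h => hadj (G.adj_symm h)
        simp [hadj, hadj']
    rw [← h2, ← hswap]
    ring
  -- the limit of the symmetrized sum
  have hlim : Tendsto
      (fun β : ℝ => (1 / 2 : ℂ) * ∑ x : V, ∑ y : V,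
        (if G.Adj x y then ((Gr x y * P x y : ℝ) : ℂ) *
          (((β : ℂ) ^ 2)⁻¹ * (2 * (d : ℂ)
            - Matrix.trace (NormedSpace.exp ((Complex.I * β) • A y x))
            - Matrix.trace (NormedSpace.exp ((Complex.I * β) • (-(A y x)))))) else 0))
      (nhdsWithin 0 {0}ᶜ)
      (nhds ((1 / 2 : ℂ) *
        ∑ x : V, ∑ y : V,
          if G.Adj x y then ((Gr x y * P x y : ℝ) : ℂ) * Matrix.trace (A x y ^ 2) else 0)) := by
    refine Tendsto.const_mul _ (tendsto_finset_sum _ fun x _ => tendsto_finset_sum _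
      fun y _ => ?_)
    by_cases hadj : G.Adj x y
    · simp only [if_pos hadj]
      have hH : (A y x).IsHermitian := hAherm y x (G.adj_symm hadj)
      have hlim' := (auxTG_matrix_lim (A y x) hH).const_mul (((Gr x y * P x y : ℝ) : ℂ))
      have heq : Matrix.trace (A y x * A y x) = Matrix.trace (A x y ^ 2) := by
        rw [hAskew x y hadj, neg_mul_neg, sq]
      rw [heq] at hlim'
      exact hlim'
    · simp only [if_neg hadj]
      exact tendsto_const_nhds
  refine hlim.congr fun β => ?_
  rw [← sym_eq β, ← main_eq β]
end

section
/- Let 𝒢 be a finite connected simple graph with killing function κ not identically zero whose transition matrix P is symmetric, let d ≥ 1, and let (A_{xy}) be a Hermitian connection on 𝒢. Set E^β = P ⊗ I_d − B^β. Then lim_{β→0} β^{−2} Tr( E^β (G ⊗ I_d) E^β (G ⊗ I_d) ) = −(1/2) Σ_{(x0,x1,x2,x3): x0∼x1, x2∼x3} P_{x0x1} P_{x2x3} Tr(A_{x0x1} A_{x2x3}) (G_{x0x3} G_{x1x2} − G_{x0x2} G_{x1x3}), the sum being over ordered quadruples of vertices with x0 adjacent to x1 and x2 adjacent to x3. -/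
open Matrix Kronecker Filter

section AuxLemmas

attribute [local instance] Matrix.linftyOpNormedRing Matrix.linftyOpNormedAlgebra
  Matrix.linftyOpNormedAddCommGroup

lemma aux_exp_slope {d : ℕ} (M : Matrix (Fin d) (Fin d) ℂ) :
    Tendsto (fun β : ℝ => (β : ℝ)⁻¹ •
        ((1 : Matrix (Fin d) (Fin d) ℂ) - NormedSpace.exp ((Complex.I * (β : ℂ)) • M)))
      (nhdsWithin 0 {0}ᶜ) (nhds (-(Complex.I • M))) := by
  have h0 : HasDerivAt (fun β : ℝ => NormedSpace.exp (β • (Complex.I • M)))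
      (NormedSpace.exp ((0 : ℝ) • (Complex.I • M)) * (Complex.I • M)) 0 :=
    hasDerivAt_exp_smul_const _ _
  rw [zero_smul, NormedSpace.exp_zero, one_mul] at h0
  have h1 := (hasDerivAt_iff_tendsto_slope.mp h0).neg
  refine h1.congr (fun β => ?_)
  rw [slope_def_module, zero_smul, NormedSpace.exp_zero, sub_zero, ← smul_neg, neg_sub]
  congr 2
  · congr 1
    rw [← Complex.coe_smul, smul_smul, mul_comm]

end AuxLemmas

lemma aux_trace_kron {V : Type*} [Fintype V] [DecidableEq V] {d : ℕ}
    (L : Matrix (V × Fin d) (V × Fin d) ℂ) (g : Matrix V V ℂ) :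
    Matrix.trace (L * (g ⊗ₖ (1 : Matrix (Fin d) (Fin d) ℂ)) * L *
        (g ⊗ₖ (1 : Matrix (Fin d) (Fin d) ℂ))) =
    ∑ x0, ∑ x1, ∑ x2, ∑ x3, g x1 x2 * g x3 x0 *
      ∑ i, ∑ j, L (x0, i) (x1, j) * L (x2, j) (x3, i) := by
  have step1 : Matrix.trace (L * (g ⊗ₖ (1 : Matrix (Fin d) (Fin d) ℂ)) * L *
      (g ⊗ₖ (1 : Matrix (Fin d) (Fin d) ℂ)))
      = ∑ p : V × Fin d × V × V × Fin d × V,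
          L (p.1, p.2.1) (p.2.2.2.2.2, p.2.2.2.2.1) * g p.2.2.2.2.2 p.2.2.2.1 *
            L (p.2.2.2.1, p.2.2.2.2.1) (p.2.2.1, p.2.1) * g p.2.2.1 p.1 := by
    simp only [Matrix.trace, Matrix.diag, Matrix.mul_apply, kroneckerMap_apply, Matrix.one_apply,
      Fintype.sum_prod_type, mul_ite, ite_mul, mul_one, mul_zero, zero_mul, one_mul,
      Finset.sum_ite_eq, Finset.sum_ite_eq', Finset.mem_univ, if_true, Finset.sum_mul,
      Finset.mul_sum]
  have step3 : (∑ q : V × V × V × V × Fin d × Fin d,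
      g q.2.1 q.2.2.1 * g q.2.2.2.1 q.1 *
        (L (q.1, q.2.2.2.2.1) (q.2.1, q.2.2.2.2.2) * L (q.2.2.1, q.2.2.2.2.2) (q.2.2.2.1, q.2.2.2.2.1)))
      = ∑ x0, ∑ x1, ∑ x2, ∑ x3, g x1 x2 * g x3 x0 *
          ∑ i, ∑ j, L (x0, i) (x1, j) * L (x2, j) (x3, i) := by
    simp only [Fintype.sum_prod_type, Finset.mul_sum]
  rw [step1, ← step3]
  refine Fintype.sum_equiv
    ⟨fun p => (p.1, p.2.2.2.2.2, p.2.2.2.1, p.2.2.1, p.2.1, p.2.2.2.2.1),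
     fun q => (q.1, q.2.2.2.2.1, q.2.2.2.1, q.2.2.1, q.2.2.2.2.2, q.2.1),
     fun p => rfl, fun q => rfl⟩ _ _ ?_
  rintro ⟨x0, i, a, b, j, c⟩
  dsimp
  ring

/-- With `E^β = P ⊗ I_d - B^β`,
`lim_{β→0} β⁻² Tr(E^β (G ⊗ I_d) E^β (G ⊗ I_d))
  = -(1/2) ∑_{x0∼x1, x2∼x3} P_{x0x1}P_{x2x3} Tr(A_{x0x1}A_{x2x3})
      (G_{x0x3}G_{x1x2} - G_{x0x2}G_{x1x3})`. -/
theorem tendsto_trace_green_perturbation_sq_holonomy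
    {V : Type*} [Fintype V] [DecidableEq V]
    (G : SimpleGraph V) [DecidableRel G.Adj] (hconn : G.Connected)
    (κ : V → ℝ) (hκnn : ∀ x, 0 ≤ κ x) (hκ : κ ≠ 0)
    (P : Matrix V V ℝ)
    (hP : ∀ x y, P x y = if G.Adj x y then 1 / (κ x + (G.degree x : ℝ)) else 0)
    (hPsymm : ∀ x y, P x y = P y x)
    (Gr : Matrix V V ℝ) (hGr : Gr = (1 - P)⁻¹)
    (d : ℕ) (hd : 1 ≤ d)
    (A : V → V → Matrix (Fin d) (Fin d) ℂ)
    (hAherm : ∀ x y, G.Adj x y → (A x y).IsHermitian)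
    (hAskew : ∀ x y, G.Adj x y → A y x = - A x y)
    (B : ℝ → Matrix (V × Fin d) (V × Fin d) ℂ)
    (hB : ∀ β x y i j, B β (x, i) (y, j) =
      if G.Adj x y then (P x y : ℂ) * (NormedSpace.exp ((Complex.I * β) • A x y)) i j
      else 0)
    (Eβ : ℝ → Matrix (V × Fin d) (V × Fin d) ℂ)
    (hEβ : ∀ β, Eβ β = (P.map Complex.ofReal) ⊗ₖ (1 : Matrix (Fin d) (Fin d) ℂ) - B β) :
    Tendsto
      (fun β : ℝ => ((β : ℂ) ^ 2)⁻¹ *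
        Matrix.trace
          (Eβ β * ((Gr.map Complex.ofReal) ⊗ₖ (1 : Matrix (Fin d) (Fin d) ℂ)) *
            Eβ β * ((Gr.map Complex.ofReal) ⊗ₖ (1 : Matrix (Fin d) (Fin d) ℂ))))
      (nhdsWithin 0 {0}ᶜ)
      (nhds (-(1 / 2 : ℂ) *
        ∑ x0 : V, ∑ x1 : V, ∑ x2 : V, ∑ x3 : V,
          if G.Adj x0 x1 ∧ G.Adj x2 x3 then
            ((P x0 x1 * P x2 x3 : ℝ) : ℂ) * Matrix.trace (A x0 x1 * A x2 x3) *
              ((Gr x0 x3 * Gr x1 x2 - Gr x0 x2 * Gr x1 x3 : ℝ) : ℂ)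
          else 0)) := by
  classical
  have hPz : ∀ x y, ¬ G.Adj x y → P x y = 0 := fun x y h => by simp [hP, h]
  -- symmetry of Gr
  have hGrsymm : ∀ x y, Gr x y = Gr y x := by
    have hPt : Pᵀ = P := by ext x y; exact hPsymm y x
    have : Grᵀ = Gr := by
      rw [hGr, Matrix.transpose_nonsing_inv]
      congr 1
      rw [Matrix.transpose_sub, Matrix.transpose_one, hPt]
    intro x y
    conv_lhs => rw [← this]
    rfl
  set Gd : Matrix (V × Fin d) (V × Fin d) ℂ :=
    (Gr.map Complex.ofReal) ⊗ₖ (1 : Matrix (Fin d) (Fin d) ℂ) with hGd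
  set L : Matrix (V × Fin d) (V × Fin d) ℂ :=
    Matrix.of (fun p q => if G.Adj p.1 q.1 then
      (-Complex.I) * (P p.1 q.1 : ℂ) * A p.1 q.1 p.2 q.2 else 0) with hLdef
  -- entrywise convergence of β⁻¹ • Eβ β to L
  have hEL : Tendsto (fun β : ℝ => ((β : ℂ)⁻¹ • Eβ β)) (nhdsWithin 0 {0}ᶜ) (nhds L) := by
    refine tendsto_pi_nhds.mpr ?_
    intro p
    refine tendsto_pi_nhds.mpr ?_
    intro q
    obtain ⟨x, i⟩ := p
    obtain ⟨y, j⟩ := q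
    by_cases hadj : G.Adj x y
    · have hE' : ∀ β : ℝ, ((β : ℂ)⁻¹ • Eβ β) (x, i) (y, j) =
          (P x y : ℂ) * (((β : ℝ)⁻¹ •
            ((1 : Matrix (Fin d) (Fin d) ℂ) -
              NormedSpace.exp ((Complex.I * (β : ℂ)) • A x y))) i j) := by
        intro β
        rw [Matrix.smul_apply, hEβ, Matrix.sub_apply, kroneckerMap_apply, Matrix.map_apply,
          hB, if_pos hadj, Matrix.smul_apply, Matrix.sub_apply]
        rw [smul_eq_mul, Complex.real_smul, Complex.ofReal_inv]
        ring
      have h2 := aux_exp_slope (A x y)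
      have h3 : Tendsto (fun β : ℝ => (((β : ℝ)⁻¹ •
          ((1 : Matrix (Fin d) (Fin d) ℂ) -
            NormedSpace.exp ((Complex.I * (β : ℂ)) • A x y))) i j))
          (nhdsWithin 0 {0}ᶜ) (nhds ((-(Complex.I • A x y)) i j)) := by
        replace h2 := tendsto_pi_nhds.mp h2
        have := h2 i
        replace this := tendsto_pi_nhds.mp this
        exact this j
      have h4 := h3.const_mul ((P x y : ℂ))
      refine Tendsto.congr (fun β => (hE' β).symm) ?_
      have : L (x, i) (y, j) = (P x y : ℂ) * ((-(Complex.I • A x y)) i j) := by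
        simp only [hLdef, Matrix.of_apply, if_pos hadj, Matrix.neg_apply, Matrix.smul_apply,
          smul_eq_mul]
        ring
      rw [this]
      exact h4
    · have hz : ∀ β : ℝ, ((β : ℂ)⁻¹ • Eβ β) (x, i) (y, j) = 0 := by
        intro β
        rw [Matrix.smul_apply, hEβ, Matrix.sub_apply, kroneckerMap_apply, Matrix.map_apply,
          hB, if_neg hadj, hPz x y hadj]
        simp
      have hL0 : L (x, i) (y, j) = 0 := by simp [hLdef, hadj]
      rw [hL0]
      exact Tendsto.congr (fun β => (hz β).symm) tendsto_const_nhds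
  -- continuity of the trace expression
  have hcont : Continuous (fun M : Matrix (V × Fin d) (V × Fin d) ℂ =>
      Matrix.trace (M * Gd * M * Gd)) :=
    (((continuous_id.matrix_mul continuous_const).matrix_mul
      continuous_id).matrix_mul continuous_const).matrix_trace
  have hmain : Tendsto (fun β : ℝ =>
      Matrix.trace (((β : ℂ)⁻¹ • Eβ β) * Gd * ((β : ℂ)⁻¹ • Eβ β) * Gd))
      (nhdsWithin 0 {0}ᶜ) (nhds (Matrix.trace (L * Gd * L * Gd))) :=
    (hcont.tendsto L).comp hEL
  -- identify the function
  have hfun : ∀ β : ℝ,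
      Matrix.trace (((β : ℂ)⁻¹ • Eβ β) * Gd * ((β : ℂ)⁻¹ • Eβ β) * Gd)
      = ((β : ℂ) ^ 2)⁻¹ * Matrix.trace (Eβ β * Gd * Eβ β * Gd) := by
    intro β
    simp only [smul_mul_assoc, mul_smul_comm, smul_smul, Matrix.trace_smul, smul_eq_mul, sq,
      mul_inv]
  -- identify the limit value
  have htr : ∀ x0 x1 x2 x3 : V, Matrix.trace (A x0 x1 * A x2 x3)
      = ∑ i, ∑ j, A x0 x1 i j * A x2 x3 j i := by
    intro x0 x1 x2 x3
    simp [Matrix.trace, Matrix.mul_apply, Matrix.diag]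
  have hval : Matrix.trace (L * Gd * L * Gd) =
      -∑ x0 : V, ∑ x1 : V, ∑ x2 : V, ∑ x3 : V,
        (if G.Adj x0 x1 ∧ G.Adj x2 x3 then
          ((P x0 x1 * P x2 x3 : ℝ) : ℂ) * Matrix.trace (A x0 x1 * A x2 x3) *
            ((Gr x0 x3 * Gr x1 x2 : ℝ) : ℂ)
        else 0) := by
    rw [hGd, aux_trace_kron]
    rw [← Finset.sum_neg_distrib]
    refine Finset.sum_congr rfl fun x0 _ => ?_
    rw [← Finset.sum_neg_distrib]
    refine Finset.sum_congr rfl fun x1 _ => ?_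
    rw [← Finset.sum_neg_distrib]
    refine Finset.sum_congr rfl fun x2 _ => ?_
    rw [← Finset.sum_neg_distrib]
    refine Finset.sum_congr rfl fun x3 _ => ?_
    by_cases hadj : G.Adj x0 x1 ∧ G.Adj x2 x3
    · rw [if_pos hadj, htr]
      have hfact : ∑ i, ∑ j, L (x0, i) (x1, j) * L (x2, j) (x3, i)
          = ((-Complex.I) * (P x0 x1 : ℂ)) * ((-Complex.I) * (P x2 x3 : ℂ)) *
            ∑ i, ∑ j, A x0 x1 i j * A x2 x3 j i := by
        rw [Finset.mul_sum]
        refine Finset.sum_congr rfl fun i _ => ?_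
        rw [Finset.mul_sum]
        refine Finset.sum_congr rfl fun j _ => ?_
        simp only [hLdef, Matrix.of_apply, if_pos hadj.1, if_pos hadj.2]
        ring
      have hII : ∀ z w : ℂ, -Complex.I * z * (-Complex.I * w) = -(z * w) := by
        intro z w
        linear_combination z * w * Complex.I_mul_I
      rw [hfact, hII]
      simp only [Matrix.map_apply]
      rw [hGrsymm x3 x0]
      push_cast
      ring
    · rw [if_neg hadj, neg_zero]
      rcases not_and_or.mp hadj with h | h
      · have : ∀ i j : Fin d, L (x0, i) (x1, j) = 0 := by
          intro i j; simp [hLdef, h]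
        simp [this]
      · have : ∀ i j : Fin d, L (x2, j) (x3, i) = 0 := by
          intro i j; simp [hLdef, h]
        simp [this]
  -- the swap identity
  have hswap : ∀ x0 x1 : V,
      (∑ x2 : V, ∑ x3 : V, if G.Adj x0 x1 ∧ G.Adj x2 x3 then
        ((P x0 x1 * P x2 x3 : ℝ) : ℂ) * Matrix.trace (A x0 x1 * A x2 x3) *
          ((Gr x0 x2 * Gr x1 x3 : ℝ) : ℂ) else 0)
      = ∑ x2 : V, ∑ x3 : V, -(if G.Adj x0 x1 ∧ G.Adj x2 x3 then
        ((P x0 x1 * P x2 x3 : ℝ) : ℂ) * Matrix.trace (A x0 x1 * A x2 x3) *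
          ((Gr x0 x3 * Gr x1 x2 : ℝ) : ℂ) else 0) := by
    intro x0 x1
    rw [Finset.sum_comm]
    refine Finset.sum_congr rfl fun a _ => Finset.sum_congr rfl fun b _ => ?_
    by_cases h : G.Adj x0 x1 ∧ G.Adj a b
    · rw [if_pos ⟨h.1, h.2.symm⟩, if_pos h, hAskew a b h.2, hPsymm b a]
      rw [Matrix.mul_neg, Matrix.trace_neg]
      push_cast
      ring
    · have h' : ¬ (G.Adj x0 x1 ∧ G.Adj b a) := by
        rintro ⟨h1, h2⟩; exact h ⟨h1, h2.symm⟩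
      rw [if_neg h', if_neg h, neg_zero]
  -- final assembly
  refine Tendsto.congr (fun β => hfun β) ?_
  have hfinal : (-(1 / 2 : ℂ) *
      ∑ x0 : V, ∑ x1 : V, ∑ x2 : V, ∑ x3 : V,
        if G.Adj x0 x1 ∧ G.Adj x2 x3 then
          ((P x0 x1 * P x2 x3 : ℝ) : ℂ) * Matrix.trace (A x0 x1 * A x2 x3) *
            ((Gr x0 x3 * Gr x1 x2 - Gr x0 x2 * Gr x1 x3 : ℝ) : ℂ)
        else 0) = Matrix.trace (L * Gd * L * Gd) := by
    rw [hval]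
    have hsplit : ∀ x0 x1 x2 x3 : V,
        (if G.Adj x0 x1 ∧ G.Adj x2 x3 then
          ((P x0 x1 * P x2 x3 : ℝ) : ℂ) * Matrix.trace (A x0 x1 * A x2 x3) *
            ((Gr x0 x3 * Gr x1 x2 - Gr x0 x2 * Gr x1 x3 : ℝ) : ℂ)
        else 0)
        = (if G.Adj x0 x1 ∧ G.Adj x2 x3 then
            ((P x0 x1 * P x2 x3 : ℝ) : ℂ) * Matrix.trace (A x0 x1 * A x2 x3) *
              ((Gr x0 x3 * Gr x1 x2 : ℝ) : ℂ) else 0)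
          - (if G.Adj x0 x1 ∧ G.Adj x2 x3 then
            ((P x0 x1 * P x2 x3 : ℝ) : ℂ) * Matrix.trace (A x0 x1 * A x2 x3) *
              ((Gr x0 x2 * Gr x1 x3 : ℝ) : ℂ) else 0) := by
      intro x0 x1 x2 x3
      by_cases h : G.Adj x0 x1 ∧ G.Adj x2 x3
      · rw [if_pos h, if_pos h, if_pos h]
        push_cast
        ring
      · rw [if_neg h, if_neg h, if_neg h, sub_zero]
    simp only [hsplit, Finset.sum_sub_distrib]
    have hS2 : (∑ x0 : V, ∑ x1 : V, ∑ x2 : V, ∑ x3 : V,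
        if G.Adj x0 x1 ∧ G.Adj x2 x3 then
          ((P x0 x1 * P x2 x3 : ℝ) : ℂ) * Matrix.trace (A x0 x1 * A x2 x3) *
            ((Gr x0 x2 * Gr x1 x3 : ℝ) : ℂ) else 0)
        = -(∑ x0 : V, ∑ x1 : V, ∑ x2 : V, ∑ x3 : V,
        if G.Adj x0 x1 ∧ G.Adj x2 x3 then
          ((P x0 x1 * P x2 x3 : ℝ) : ℂ) * Matrix.trace (A x0 x1 * A x2 x3) *
            ((Gr x0 x3 * Gr x1 x2 : ℝ) : ℂ) else 0) := by
      rw [← Finset.sum_neg_distrib]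
      refine Finset.sum_congr rfl fun x0 _ => ?_
      rw [← Finset.sum_neg_distrib]
      refine Finset.sum_congr rfl fun x1 _ => ?_
      rw [hswap x0 x1]
      simp [Finset.sum_neg_distrib]
    rw [hS2]
    ring
  rw [hfinal]
  exact hmain
end
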